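/- arXiv:1901.09363 — 5 statements merged into one kernel-verified Lean document; each statement's English description precedes it below -/
import Mathlib

section
/- Let k ∈ ℕ and let R = (V, ≤, ρ_1, …, ρ_k) be an ordered binary structure of type k. Then R has a finite monomorphic decomposition if and only if for every i with 1 ≤ i ≤ k the ordered binary structure R_i = (V, ≤, ρ_i) has a finite monomorphic decomposition. -/
/-- An ordered binary structure: a domain `V`, a linear order `le` on `V`,
and a family of binary relations `rel i` on `V` indexed by `ι`. -/
structure OrdBin (ι : Type) where
  V : Type
  le : V → V → Prop
  linear : IsLinearOrder V le
  rel : ι → V → V → Prop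

namespace OrdBin

variable {ι : Type}

/-- The substructure induced on a subset `A` of the domain. -/
def restrict (R : OrdBin ι) (A : Set R.V) : OrdBin ι where
  V := A
  le := fun a b => R.le a.1 b.1
  linear := by
    haveI := R.linear
    exact
      { refl := fun a => refl_of R.le a.1
        trans := fun a b c hab hbc => trans_of R.le hab hbc
        antisymm := fun a b hab hba => Subtype.ext (antisymm_of R.le hab hba)
        total := fun a b => total_of R.le a.1 b.1 }
  rel := fun i a b => R.rel i a.1 b.1

/-- Isomorphism of ordered binary structures: a bijection of the domains preserving
the linear order and each binary relation. -/
def Iso (R S : OrdBin ι) : Prop :=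
  ∃ e : R.V ≃ S.V, (∀ x y : R.V, R.le x y ↔ S.le (e x) (e y)) ∧
    ∀ (i : ι) (x y : R.V), R.rel i x y ↔ S.rel i (e x) (e y)

/-- `R` embeds in `S` if `R` is isomorphic to an induced substructure of `S`. -/
def Embeds (R S : OrdBin ι) : Prop :=
  ∃ A : Set S.V, Iso R (S.restrict A)

/-- `B` is a monomorphic part of `R`: any two finite subsets of the domain of the
same cardinality which agree outside `B` induce isomorphic substructures. -/
def MonoPart (R : OrdBin ι) (B : Set R.V) : Prop :=
  ∀ A A' : Set R.V, A.Finite → A'.Finite → A.ncard = A'.ncard →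
    A \ B = A' \ B → Iso (R.restrict A) (R.restrict A')

/-- A monomorphic decomposition of `R`: a partition of the domain into monomorphic parts. -/
def MonoDecomp (R : OrdBin ι) (P : Set (Set R.V)) : Prop :=
  Setoid.IsPartition P ∧ ∀ B ∈ P, R.MonoPart B

/-- `R` has a monomorphic decomposition with finitely many blocks. -/
def HasFiniteMonoDecomp (R : OrdBin ι) : Prop :=
  ∃ P : Set (Set R.V), R.MonoDecomp P ∧ P.Finite

/-- A hereditary class of finite ordered binary structures. -/
def Hereditary (C : Set (OrdBin ι)) : Prop :=
  (∀ R ∈ C, Finite R.V) ∧ ∀ R ∈ C, ∀ S : OrdBin ι, Embeds S R → S ∈ C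

/-- `x` and `y` are `F`-equivalent: the substructures induced on `{x} ∪ F` and
`{y} ∪ F` are isomorphic. -/
def EqF (R : OrdBin ι) (F : Set R.V) (x y : R.V) : Prop :=
  Iso (R.restrict (insert x F)) (R.restrict (insert y F))

/-- `x ≃_{m,R} y`: `x` and `y` are `F`-equivalent for every `m`-element subset `F`
of `V \ {x, y}`. -/
def EqM (R : OrdBin ι) (m : ℕ) (x y : R.V) : Prop :=
  ∀ F : Set R.V, F.Finite → F.ncard = m → x ∉ F → y ∉ F → EqF R F x y

/-- `x ≃_{≤m,R} y`: `x ≃_{m',R} y` for every `m' ≤ m`. -/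
def EqLe (R : OrdBin ι) (m : ℕ) (x y : R.V) : Prop :=
  ∀ m' ≤ m, EqM R m' x y

/-- `x ≃_R y`: `x ≃_{m,R} y` for every `m`. -/
def EqR (R : OrdBin ι) (x y : R.V) : Prop :=
  ∀ m : ℕ, EqM R m x y

/-- `d(x,y) = d(x',y')`: the pair of truth values `(ρ_i(x,y), ρ_i(y,x))` agrees with
`(ρ_i(x',y'), ρ_i(y',x'))` for every `i`. -/
def dEq (R : OrdBin ι) (x y x' y' : R.V) : Prop :=
  ∀ i : ι, (R.rel i x y ↔ R.rel i x' y') ∧ (R.rel i y x ↔ R.rel i y' x')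

/-- `A` is an interval of the linear order `(V, le)`. -/
def IntervalLe (R : OrdBin ι) (A : Set R.V) : Prop :=
  ∀ u ∈ A, ∀ w ∈ A, ∀ z : R.V, R.le u z → R.le z w → z ∈ A

/-- `A` is an interval of `R`: an interval of the order such that all elements of `A`
have the same relations to each element outside `A`. -/
def IntervalR (R : OrdBin ι) (A : Set R.V) : Prop :=
  IntervalLe R A ∧ ∀ u ∈ A, ∀ u' ∈ A, ∀ w ∉ A, dEq R u w u' w

/-- `R` is `n`-monomorphic: the substructures induced on any two `n`-element subsets
of the domain are isomorphic. -/
def NMono (R : OrdBin ι) (n : ℕ) : Prop :=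
  ∀ A A' : Set R.V, A.Finite → A'.Finite → A.ncard = n → A'.ncard = n →
    Iso (R.restrict A) (R.restrict A')

/-- `R` is `(≤n)`-monomorphic. -/
def LeMono (R : OrdBin ι) (n : ℕ) : Prop :=
  ∀ m ≤ n, NMono R m

/-- `R` is monomorphic. -/
def Mono (R : OrdBin ι) : Prop :=
  ∀ n : ℕ, NMono R n

/-- The profile of `R`: the number of induced substructures on `n`-element subsets
of the domain, counted up to isomorphism. -/
noncomputable def profileR (R : OrdBin ι) (n : ℕ) : ℕ :=
  Nat.card (Quot fun (A B : {A : Set R.V // A.Finite ∧ A.ncard = n}) =>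
    Iso (R.restrict A.1) (R.restrict B.1))

/-- The profile of a class `C`: the number of members of `C` with exactly `n`
elements, counted up to isomorphism. -/
noncomputable def profileC (C : Set (OrdBin ι)) (n : ℕ) : ℕ :=
  Nat.card (Quot fun (R S : {R : OrdBin ι // R ∈ C ∧ Nat.card R.V = n}) =>
    Iso R.1 S.1)

end OrdBin

/-- The Fibonacci sequence with `F 0 = F 1 = 1`. -/
def fib1 : ℕ → ℕ
  | 0 => 1
  | 1 => 1
  | n + 2 => fib1 (n + 1) + fib1 n

namespace OrdBin

variable {ι : Type}

noncomputable def lin (R : OrdBin ι) : LinearOrder R.V := by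
  haveI := R.linear
  exact
  { le := R.le
    le_refl := fun a => refl_of R.le a
    le_trans := fun a b c hab hbc => trans_of R.le hab hbc
    le_antisymm := fun a b hab hba => antisymm_of R.le hab hba
    le_total := fun a b => total_of R.le a b
    toDecidableLE := Classical.decRel _ }

lemma monoPart_mono {R : OrdBin ι} {B B' : Set R.V} (hBB : B ⊆ B')
    (h : R.MonoPart B') : R.MonoPart B := by
  intro A A' hA hA' hcard hd
  apply h A A' hA hA' hcard
  have h1 : A \ B' = (A \ B) \ B' := by
    rw [Set.diff_diff, Set.union_eq_self_of_subset_left hBB]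
  have h2 : A' \ B' = (A' \ B) \ B' := by
    rw [Set.diff_diff, Set.union_eq_self_of_subset_left hBB]
  rw [h1, h2, hd]

lemma exists_unique_ordEquiv {R : OrdBin ι} {A A' : Set R.V} (hA : A.Finite) (hA' : A'.Finite)
    (hcard : A.ncard = A'.ncard) :
    ∃ e : A ≃ A', (∀ x y : A, R.le x.1 y.1 ↔ R.le (e x).1 (e y).1) ∧
      ∀ e' : A ≃ A', (∀ x y : A, R.le x.1 y.1 ↔ R.le (e' x).1 (e' y).1) → e' = e := by
  letI := R.lin
  haveI : Fintype A := hA.fintype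
  haveI : Fintype A' := hA'.fintype
  have hcA : Fintype.card A = A.ncard := by
    rw [Set.ncard_eq_toFinset_card', Set.toFinset_card]
  have hcA' : Fintype.card A' = A.ncard := by
    rw [hcard, Set.ncard_eq_toFinset_card', Set.toFinset_card]
  let e0 : A ≃o A' := (monoEquivOfFin A hcA).symm.trans (monoEquivOfFin A' hcA')
  refine ⟨e0.toEquiv, fun x y => e0.le_iff_le.symm, ?_⟩
  intro e' he'
  let e1 : A ≃o A' := ⟨e', fun {a b} => (he' a b).symm⟩
  have : e1 = e0 := Subsingleton.elim _ _
  exact congrArg RelIso.toEquiv this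

def comp {k : ℕ} (R : OrdBin (Fin k)) (i : Fin k) : OrdBin (Fin 1) :=
  ⟨R.V, R.le, R.linear, fun _ => R.rel i⟩

lemma monoPart_comp {k : ℕ} {R : OrdBin (Fin k)} {B : Set R.V} (h : R.MonoPart B)
    (i : Fin k) : (comp R i).MonoPart B := by
  intro A A' hA hA' hc hd
  obtain ⟨e, hle, hrel⟩ := h A A' hA hA' hc hd
  exact ⟨e, hle, fun _ x y => hrel i x y⟩

lemma monoPart_of_comps {k : ℕ} {R : OrdBin (Fin k)} {B : Set R.V}
    (h : ∀ i, (comp R i).MonoPart B) : R.MonoPart B := by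
  intro A A' hA hA' hc hd
  obtain ⟨e0, hle0, huniq⟩ := exists_unique_ordEquiv (R := R) hA hA' hc
  refine ⟨e0, hle0, ?_⟩
  intro i x y
  obtain ⟨ei, hlei, hreli⟩ := h i A A' hA hA' hc hd
  have : ei = e0 := huniq ei hlei
  rw [← this]
  exact hreli 0 x y

end OrdBin

/-- An ordered binary structure `R = (V, ≤, ρ_1, …, ρ_k)` of type `k` has a
finite monomorphic decomposition iff each `R_i = (V, ≤, ρ_i)` has one. -/
theorem hasFiniteMonoDecomp_iff_components {k : ℕ} (R : OrdBin (Fin k)) :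
    R.HasFiniteMonoDecomp ↔
      ∀ i : Fin k,
        OrdBin.HasFiniteMonoDecomp
          (⟨R.V, R.le, R.linear, fun _ => R.rel i⟩ : OrdBin (Fin 1)) := by
  constructor
  · rintro ⟨P, ⟨hpart, hmono⟩, hfin⟩ i
    exact ⟨P, ⟨hpart, fun B hB => OrdBin.monoPart_comp (hmono B hB) i⟩, hfin⟩
  · intro h
    choose P hP using h
    -- block of v in P i
    have hblk : ∀ (v : R.V) (i : Fin k), ∃ B, (B ∈ P i ∧ v ∈ B) ∧
        ∀ B', B' ∈ P i ∧ v ∈ B' → B' = B := by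
      intro v i
      obtain ⟨B, hB, hu⟩ := (hP i).1.1.2 v
      exact ⟨B, hB, hu⟩
    choose blk hblkmem hblkuniq using hblk
    set f : R.V → Fin k → Set R.V := fun v i => blk v i with hf
    set P' : Set (Set R.V) := {S | ∃ x, S = {y | f y = f x}} with hP'
    refine ⟨P', ⟨⟨?_, ?_⟩, ?_⟩, ?_⟩
    · rintro ⟨x, hx⟩
      have : x ∈ ({y | f y = f x} : Set R.V) := rfl
      rw [← hx] at this
      exact this
    · intro a
      refine ⟨{y | f y = f a}, ⟨⟨a, rfl⟩, rfl⟩, ?_⟩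
      rintro S ⟨⟨x, rfl⟩, ha⟩
      have ha' : f a = f x := ha
      ext y
      simp only [Set.mem_setOf_eq, ha']
    · rintro B ⟨x, rfl⟩ A A' hA hA' hc hd
      have hBsub : ∀ i, {y | f y = f x} ⊆ blk x i := by
        intro i y hy
        have : blk y i = blk x i := congrFun hy i
        rw [← this]
        exact (hblkmem y i).2
      refine OrdBin.monoPart_of_comps (fun i => ?_) A A' hA hA' hc hd
      exact OrdBin.monoPart_mono (hBsub i)
        (OrdBin.monoPart_mono (le_refl _) ((hP i).1.2 _ (hblkmem x i).1))
    · have hrange : (Set.range f).Finite := by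
        apply Set.Finite.subset (Set.Finite.pi (fun i => (hP i).2))
        rintro g ⟨v, rfl⟩
        intro i _
        exact (hblkmem v i).1
      apply Set.Finite.subset (hrange.image (fun g => {y | f y = g}))
      rintro B ⟨x, rfl⟩
      exact ⟨f x, ⟨x, rfl⟩, rfl⟩
end

section
/- Let R = (V, (ρ_i)_{i∈I}) be a relational structure. For every m ∈ ℕ, the relations ≃_{m,R}, ≃_{≤m,R} and ≃_R are equivalence relations on V. Moreover, every equivalence class of ≃_R is a monomorphic part of R, and every monomorphic part of R is contained in a single equivalence class of ≃_R; hence the equivalence classes of ≃_R are exactly the maximal monomorphic parts (the monomorphic components) of R. -/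
/-- A relational structure of signature `ar : ι → ℕ`: a domain `V` together with,
for each `i : ι`, an `ar i`-ary relation on `V`. -/
structure RelStruct (ι : Type) (ar : ι → ℕ) where
  V : Type
  rel : ∀ i : ι, (Fin (ar i) → V) → Prop

namespace RelStruct

variable {ι : Type} {ar : ι → ℕ}

/-- The substructure induced on a subset `A` of the domain. -/
def restrict (R : RelStruct ι ar) (A : Set R.V) : RelStruct ι ar where
  V := A
  rel := fun i f => R.rel i fun j => (f j : R.V)

/-- Isomorphism of relational structures: a bijection of the domains transporting
each relation onto the corresponding one. -/
def Iso (R S : RelStruct ι ar) : Prop :=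
  ∃ e : R.V ≃ S.V, ∀ (i : ι) (f : Fin (ar i) → R.V), R.rel i f ↔ S.rel i fun j => e (f j)

/-- `R` embeds in `S` if `R` is isomorphic to an induced substructure of `S`. -/
def Embeds (R S : RelStruct ι ar) : Prop :=
  ∃ A : Set S.V, Iso R (S.restrict A)

/-- `B` is a monomorphic part of `R`: any two finite subsets of the domain of the
same cardinality which agree outside `B` induce isomorphic substructures. -/
def MonoPart (R : RelStruct ι ar) (B : Set R.V) : Prop :=
  ∀ A A' : Set R.V, A.Finite → A'.Finite → A.ncard = A'.ncard →
    A \ B = A' \ B → Iso (R.restrict A) (R.restrict A')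

/-- A monomorphic decomposition of `R`: a partition of the domain into monomorphic parts. -/
def MonoDecomp (R : RelStruct ι ar) (P : Set (Set R.V)) : Prop :=
  Setoid.IsPartition P ∧ ∀ B ∈ P, R.MonoPart B

/-- `R` has a monomorphic decomposition with finitely many blocks. -/
def HasFiniteMonoDecomp (R : RelStruct ι ar) : Prop :=
  ∃ P : Set (Set R.V), R.MonoDecomp P ∧ P.Finite

/-- The age of `R`: the class of finite structures embeddable in `R`. -/
def Age (R : RelStruct ι ar) : Set (RelStruct ι ar) :=
  {S | Finite S.V ∧ Embeds S R}

/-- A hereditary class of finite structures: all members are finite, and every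
structure embeddable in a member is again a member. -/
def Hereditary (C : Set (RelStruct ι ar)) : Prop :=
  (∀ R ∈ C, Finite R.V) ∧ ∀ R ∈ C, ∀ S : RelStruct ι ar, Embeds S R → S ∈ C

/-- `x` and `y` are `F`-equivalent: the substructures induced on `{x} ∪ F` and
`{y} ∪ F` are isomorphic. -/
def EqF (R : RelStruct ι ar) (F : Set R.V) (x y : R.V) : Prop :=
  Iso (R.restrict (insert x F)) (R.restrict (insert y F))

/-- `x ≃_{m,R} y`: `x` and `y` are `F`-equivalent for every `m`-element subset `F`
of `V \ {x, y}`. -/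
def EqM (R : RelStruct ι ar) (m : ℕ) (x y : R.V) : Prop :=
  ∀ F : Set R.V, F.Finite → F.ncard = m → x ∉ F → y ∉ F → EqF R F x y

/-- `x ≃_{≤m,R} y`: `x ≃_{m',R} y` for every `m' ≤ m`. -/
def EqLe (R : RelStruct ι ar) (m : ℕ) (x y : R.V) : Prop :=
  ∀ m' ≤ m, EqM R m' x y

/-- `x ≃_R y`: `x ≃_{m,R} y` for every `m`. -/
def EqR (R : RelStruct ι ar) (x y : R.V) : Prop :=
  ∀ m : ℕ, EqM R m x y

/-- The profile of `R`: the number of induced substructures on `n`-element subsets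
of the domain, counted up to isomorphism. -/
noncomputable def profileR (R : RelStruct ι ar) (n : ℕ) : ℕ :=
  Nat.card (Quot fun (A B : {A : Set R.V // A.Finite ∧ A.ncard = n}) =>
    Iso (R.restrict A.1) (R.restrict B.1))

end RelStruct

namespace RelStruct

variable {ι : Type} {ar : ι → ℕ}

theorem iso_refl (S : RelStruct ι ar) : Iso S S :=
  ⟨Equiv.refl _, fun i f => Iff.rfl⟩

theorem iso_symm {S T : RelStruct ι ar} (h : Iso S T) : Iso T S := by
  obtain ⟨e, he⟩ := h
  refine ⟨e.symm, fun i f => ?_⟩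
  rw [he i (fun j => e.symm (f j))]
  simp

theorem iso_trans {S T U : RelStruct ι ar} (h : Iso S T) (h' : Iso T U) : Iso S U := by
  obtain ⟨e, he⟩ := h
  obtain ⟨e', he'⟩ := h'
  exact ⟨e.trans e', fun i f => (he i f).trans (he' i _)⟩

theorem iso_congr (R : RelStruct ι ar) {A A' : Set R.V} (h : A = A') :
    Iso (R.restrict A) (R.restrict A') := h ▸ iso_refl _

theorem eqM_trans (R : RelStruct ι ar) {m : ℕ} {x y z : R.V}
    (hxy : EqM R m x y) (hyz : EqM R m y z) : EqM R m x z := by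
  intro F hF hcard hx hz
  by_cases hxz : x = z
  · exact hxz ▸ iso_refl _
  by_cases hy : y ∈ F
  · -- replace y
    have hxy' : x ≠ y := fun h => hx (h ▸ hy)
    have hzy' : z ≠ y := fun h => hz (h ▸ hy)
    set F₀ : Set R.V := F \ {y} with hF₀
    have hF₀fin : F₀.Finite := hF.diff
    have hm : 0 < m := by
      rw [← hcard]
      exact Set.ncard_pos hF |>.mpr ⟨y, hy⟩
    have hF₀card : F₀.ncard = m - 1 := by
      rw [hF₀, Set.ncard_diff_singleton_of_mem hy, hcard]
    have hyF₀ : y ∉ F₀ := fun h => h.2 rfl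
    have hxF₀ : x ∉ F₀ := fun h => hx h.1
    have hzF₀ : z ∉ F₀ := fun h => hz h.1
    have hins : insert y F₀ = F := by
      rw [hF₀, Set.insert_diff_singleton, Set.insert_eq_self.mpr hy]
    have hcard' : ∀ w : R.V, w ∉ F₀ → (insert w F₀).ncard = m := by
      intro w hw
      rw [Set.ncard_insert_of_notMem hw hF₀fin, hF₀card, Nat.sub_add_cancel hm]
    have h1 : Iso (R.restrict (insert x (insert z F₀))) (R.restrict (insert y (insert z F₀))) := by
      refine hxy (insert z F₀) (hF₀fin.insert _) (hcard' z hzF₀) ?_ ?_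
      · simp [hxz, hxF₀]
      · simp [Ne.symm hzy', hyF₀]
    have h2 : Iso (R.restrict (insert y (insert x F₀))) (R.restrict (insert z (insert x F₀))) := by
      refine hyz (insert x F₀) (hF₀fin.insert _) (hcard' x hxF₀) ?_ ?_
      · simp [Ne.symm hxy', hyF₀]
      · simp [Ne.symm hxz, hzF₀]
    have e1 : insert y (insert x F₀) = insert x F := by
      rw [Set.insert_comm, hins]
    have e2 : insert z (insert x F₀) = insert x (insert z F₀) := Set.insert_comm _ _ _
    have e3 : insert y (insert z F₀) = insert z F := by
      rw [Set.insert_comm, hins]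
    exact iso_trans (iso_trans (iso_congr R e1.symm) (e2 ▸ h2))
      (iso_trans h1 (iso_congr R e3))
  · exact iso_trans (hxy F hF hcard hx hy) (hyz F hF hcard hy hz)

theorem eqM_equivalence (R : RelStruct ι ar) (m : ℕ) : Equivalence (EqM R m) where
  refl x := fun F _ _ _ _ => iso_refl _
  symm h := fun F hF hc hy hx => iso_symm (h F hF hc hx hy)
  trans := eqM_trans R

theorem monoPart_of_pairwise (R : RelStruct ι ar) (B : Set R.V)
    (hB : ∀ x ∈ B, ∀ y ∈ B, EqR R x y) : R.MonoPart B := by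
  suffices H : ∀ n : ℕ, ∀ A A' : Set R.V, A.Finite → A'.Finite → A.ncard = A'.ncard →
      A \ B = A' \ B → (A \ A').ncard = n → Iso (R.restrict A) (R.restrict A') by
    intro A A' hA hA' hc hd
    exact H _ A A' hA hA' hc hd rfl
  intro n
  induction n with
  | zero =>
    intro A A' hA hA' hc hd h0
    have hsub : A ⊆ A' := by
      rw [← Set.diff_eq_empty]
      exact (Set.ncard_eq_zero hA.diff).mp h0
    have : A = A' := Set.eq_of_subset_of_ncard_le hsub hc.ge hA'
    exact iso_congr R this
  | succ n ih =>
    intro A A' hA hA' hc hd hn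
    have hne : (A \ A').Nonempty := Set.nonempty_of_ncard_ne_zero (by omega)
    obtain ⟨a, haA, haA'⟩ := hne
    have haB : a ∈ B := by
      by_contra hab
      exact haA' (hd ▸ Set.mem_diff_of_mem haA hab : a ∈ A' \ B).1
    have hne' : (A' \ A).Nonempty := by
      by_contra hcon
      rw [Set.not_nonempty_iff_eq_empty, Set.diff_eq_empty] at hcon
      have : A' = A := Set.eq_of_subset_of_ncard_le hcon hc.le hA
      rw [this] at hn
      simp at hn
    obtain ⟨a', ha'A', ha'A⟩ := hne'
    have ha'B : a' ∈ B := by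
      by_contra hab
      exact ha'A (hd.symm ▸ Set.mem_diff_of_mem ha'A' hab : a' ∈ A \ B).1
    have heq : EqR R a a' := hB a haB a' ha'B
    set F : Set R.V := A \ {a} with hFdef
    have hFfin : F.Finite := hA.diff
    have haF : a ∉ F := fun h => h.2 rfl
    have ha'F : a' ∉ F := fun h => ha'A h.1
    have hiso1 : Iso (R.restrict (insert a F)) (R.restrict (insert a' F)) :=
      heq F.ncard F hFfin rfl haF ha'F
    have hinsA : insert a F = A := by
      rw [hFdef, Set.insert_diff_singleton, Set.insert_eq_self.mpr haA]
    set A'' : Set R.V := insert a' F with hA''def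
    have hA''fin : A''.Finite := hFfin.insert _
    have hA''card : A''.ncard = A.ncard := by
      rw [hA''def, Set.ncard_insert_of_notMem ha'F hFfin, hFdef,
        Set.ncard_diff_singleton_of_mem haA]
      have : 0 < A.ncard := (Set.ncard_pos hA).mpr ⟨a, haA⟩
      omega
    have hA''d : A'' \ B = A' \ B := by
      rw [hA''def, Set.insert_diff_of_mem _ ha'B, hFdef, Set.diff_diff_comm,
        Set.diff_singleton_eq_self (fun h => h.2 haB), hd]
    have hA''n : (A'' \ A').ncard = n := by
      have : A'' \ A' = (A \ A') \ {a} := by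
        rw [hA''def, Set.insert_diff_of_mem _ ha'A', hFdef, Set.diff_diff_comm]
      rw [this, Set.ncard_diff_singleton_of_mem ((Set.mem_diff a).mpr ⟨haA, haA'⟩), hn]
      omega
    have hiso2 := ih A'' A' hA''fin hA' (hA''card.trans hc) hA''d hA''n
    exact iso_trans (iso_trans (iso_congr R hinsA.symm) hiso1) hiso2

end RelStruct

/-- For a relational structure `R`, the relations `≃_{m,R}`, `≃_{≤m,R}` and
`≃_R` are equivalence relations; moreover every equivalence class of `≃_R` is a
monomorphic part of `R`, and every monomorphic part is contained in a single class of
`≃_R` (so the classes of `≃_R` are the monomorphic components of `R`). -/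
theorem equivalences_and_monomorphic_components {ι : Type} {ar : ι → ℕ}
    (R : RelStruct ι ar) :
    (∀ m : ℕ, Equivalence (RelStruct.EqM R m)) ∧
    (∀ m : ℕ, Equivalence (RelStruct.EqLe R m)) ∧
    Equivalence (RelStruct.EqR R) ∧
    (∀ x : R.V, R.MonoPart {y | RelStruct.EqR R x y}) ∧
    (∀ B : Set R.V, R.MonoPart B → ∀ x ∈ B, ∀ y ∈ B, RelStruct.EqR R x y) := by
  refine ⟨RelStruct.eqM_equivalence R, fun m => ?_, ?_, fun x => ?_, ?_⟩
  · exact ⟨fun x m' _ => (RelStruct.eqM_equivalence R m').refl x,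
      fun h m' hm' => (RelStruct.eqM_equivalence R m').symm (h m' hm'),
      fun h h' m' hm' => (RelStruct.eqM_equivalence R m').trans (h m' hm') (h' m' hm')⟩
  · exact ⟨fun x m => (RelStruct.eqM_equivalence R m).refl x,
      fun h m => (RelStruct.eqM_equivalence R m).symm (h m),
      fun h h' m => (RelStruct.eqM_equivalence R m).trans (h m) (h' m)⟩
  · refine RelStruct.monoPart_of_pairwise R _ (fun y hy z hz => ?_)
    exact fun m => (RelStruct.eqM_equivalence R m).trans
      ((RelStruct.eqM_equivalence R m).symm (hy m)) (hz m)
  · intro B hMono x hx y hy m F hF hc hxF hyF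
    refine hMono (insert x F) (insert y F) (hF.insert _) (hF.insert _) ?_ ?_
    · rw [Set.ncard_insert_of_notMem hxF hF, Set.ncard_insert_of_notMem hyF hF]
    · rw [Set.insert_diff_of_mem _ hx, Set.insert_diff_of_mem _ hy]
end

section
/- Let R = (V, ≤, (ρ_i)_{i∈I}) be an ordered binary structure. The following are equivalent: (1) R is monomorphic; (2) R is (≤2)-monomorphic; (3) for each i ∈ I one of the following holds for all x, y ∈ V: ρ_i(x,y) ⟺ x ≤ y; ρ_i(x,y) ⟺ y ≤ x; ρ_i(x,y) ⟺ x < y; ρ_i(x,y) ⟺ y < x; ρ_i(x,y) holds always; ρ_i(x,y) ⟺ x ≠ y; ρ_i(x,y) ⟺ x = y; or ρ_i(x,y) holds never. -/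
set_option maxHeartbeats 1600000

namespace OrdBin

variable {ι : Type}

noncomputable def mkLin {α : Type} (r : α → α → Prop) (h : IsLinearOrder α r) :
    LinearOrder α :=
  haveI := h
  { le := r
    le_refl := fun a => refl_of r a
    le_trans := fun _ _ _ hab hbc => trans_of r hab hbc
    le_antisymm := fun _ _ hab hba => antisymm_of r hab hba
    le_total := fun a b => total_of r a b
    toDecidableLE := fun _ _ => Classical.dec _ }

abbrev Forms (R : OrdBin ι) (i : ι) : Prop :=
  (∀ x y : R.V, R.rel i x y ↔ R.le x y) ∨
  (∀ x y : R.V, R.rel i x y ↔ R.le y x) ∨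
  (∀ x y : R.V, R.rel i x y ↔ (R.le x y ∧ x ≠ y)) ∨
  (∀ x y : R.V, R.rel i x y ↔ (R.le y x ∧ x ≠ y)) ∨
  (∀ x y : R.V, R.rel i x y) ∨
  (∀ x y : R.V, R.rel i x y ↔ x ≠ y) ∨
  (∀ x y : R.V, R.rel i x y ↔ x = y) ∨
  (∀ x y : R.V, ¬ R.rel i x y)

theorem forms_mono (R : OrdBin ι) (h : ∀ i, Forms R i) : Mono R := by
  haveI := R.linear
  intro n A A' hA hA' hcA hcA'
  haveI : Fintype A := hA.fintype
  haveI : Fintype A' := hA'.fintype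
  letI : LinearOrder A := mkLin _ (R.restrict A).linear
  letI : LinearOrder A' := mkLin _ (R.restrict A').linear
  have hc : Fintype.card A = n := by
    rw [← Nat.card_eq_fintype_card, Nat.card_coe_set_eq, hcA]
  have hc' : Fintype.card A' = n := by
    rw [← Nat.card_eq_fintype_card, Nat.card_coe_set_eq, hcA']
  let f : A ≃o A' := (monoEquivOfFin A hc).symm.trans (monoEquivOfFin A' hc')
  have hle : ∀ x y : A, R.le x.1 y.1 ↔ R.le (f x).1 (f y).1 := by
    intro x y
    exact (f.le_iff_le : f x ≤ f y ↔ x ≤ y).symm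
  have heq : ∀ x y : A, (x.1 = y.1) ↔ ((f x).1 = (f y).1) := by
    intro x y
    rw [← Subtype.ext_iff, ← Subtype.ext_iff, EquivLike.apply_eq_iff_eq f]
  refine ⟨f.toEquiv, fun x y => hle x y, fun i x y => ?_⟩
  show R.rel i x.1 y.1 ↔ R.rel i (f x).1 (f y).1
  have h1 := hle x y
  have h2 := hle y x
  have h3 := heq x y
  rcases h i with hf|hf|hf|hf|hf|hf|hf|hf <;> simp only [hf] <;> tauto

theorem lemono2_forms (R : OrdBin ι) (h : LeMono R 2) : ∀ i, Forms R i := by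
  haveI := R.linear
  have hdiag : ∀ x y : R.V, ∀ i, R.rel i x x ↔ R.rel i y y := by
    intro x y i
    obtain ⟨e, _, hrel⟩ := h 1 (by norm_num) {x} {y} (Set.finite_singleton x)
      (Set.finite_singleton y) (Set.ncard_singleton x) (Set.ncard_singleton y)
    have hx : (e ⟨x, rfl⟩).1 = y := (e ⟨x, rfl⟩).2
    have h2 : R.rel i x x ↔ R.rel i (e ⟨x, rfl⟩).1 (e ⟨x, rfl⟩).1 := hrel i ⟨x, rfl⟩ ⟨x, rfl⟩
    rw [hx] at h2
    exact h2
  have hpair : ∀ x y x' y' : R.V, R.le x y → x ≠ y → R.le x' y' → x' ≠ y' →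
      ∀ i, (R.rel i x y ↔ R.rel i x' y') ∧ (R.rel i y x ↔ R.rel i y' x') := by
    intro x y x' y' hxy hne hxy' hne' i
    obtain ⟨e, hle, hrel⟩ := h 2 le_rfl {x, y} {x', y'} (Set.toFinite _) (Set.toFinite _)
      (Set.ncard_pair hne) (Set.ncard_pair hne')
    have hxm : x ∈ ({x, y} : Set R.V) := Set.mem_insert x {y}
    have hym : y ∈ ({x, y} : Set R.V) := Set.mem_insert_iff.2 (Or.inr rfl)
    have ha : (e ⟨x, hxm⟩).1 = x' ∨ (e ⟨x, hxm⟩).1 = y' := (e ⟨x, hxm⟩).2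
    have hb : (e ⟨y, hym⟩).1 = x' ∨ (e ⟨y, hym⟩).1 = y' := (e ⟨y, hym⟩).2
    have hinj : (e ⟨x, hxm⟩) ≠ (e ⟨y, hym⟩) := by
      intro hcon
      exact hne (congrArg Subtype.val (e.injective hcon))
    have hkey : (e ⟨x, hxm⟩).1 = x' ∧ (e ⟨y, hym⟩).1 = y' := by
      rcases ha with h1|h1 <;> rcases hb with h2|h2
      · exact absurd (Subtype.ext (h1.trans h2.symm)) hinj
      · exact ⟨h1, h2⟩
      · exfalso
        have hth : R.le x y ↔ R.le (e ⟨x, hxm⟩).1 (e ⟨y, hym⟩).1 := hle ⟨x, hxm⟩ ⟨y, hym⟩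
        rw [h1, h2] at hth
        exact hne' (antisymm_of R.le hxy' (hth.1 hxy))
      · exact absurd (Subtype.ext (h1.trans h2.symm)) hinj
    constructor
    · have hth : R.rel i x y ↔ R.rel i (e ⟨x, hxm⟩).1 (e ⟨y, hym⟩).1 := hrel i ⟨x, hxm⟩ ⟨y, hym⟩
      rw [hkey.1, hkey.2] at hth
      exact hth
    · have hth : R.rel i y x ↔ R.rel i (e ⟨y, hym⟩).1 (e ⟨x, hxm⟩).1 := hrel i ⟨y, hym⟩ ⟨x, hxm⟩
      rw [hkey.1, hkey.2] at hth
      exact hth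
  have htri : ∀ x y : R.V, x = y ∨ (R.le x y ∧ x ≠ y) ∨ (R.le y x ∧ x ≠ y) := by
    intro x y
    by_cases hxy : x = y
    · exact Or.inl hxy
    · rcases total_of R.le x y with h'|h'
      · exact Or.inr (Or.inl ⟨h', hxy⟩)
      · exact Or.inr (Or.inr ⟨h', hxy⟩)
  intro i
  by_cases hex : ∃ p : R.V × R.V, R.le p.1 p.2 ∧ p.1 ≠ p.2
  · obtain ⟨⟨x0, y0⟩, h0le, h0ne⟩ := hex
    have key : ∀ x y : R.V,
        (x = y → (R.rel i x y ↔ R.rel i x0 x0)) ∧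
        (R.le x y → x ≠ y → (R.rel i x y ↔ R.rel i x0 y0)) ∧
        (R.le y x → x ≠ y → (R.rel i x y ↔ R.rel i y0 x0)) := by
      intro x y
      refine ⟨fun hxy => by subst hxy; exact hdiag x x0 i,
        fun h1 h2 => (hpair x y x0 y0 h1 h2 h0le h0ne i).1,
        fun h1 h2 => (hpair y x x0 y0 h1 (Ne.symm h2) h0le h0ne i).2⟩
    have master : ∀ x y : R.V, R.rel i x y ↔
        ((x = y ∧ R.rel i x0 x0) ∨ (R.le x y ∧ x ≠ y ∧ R.rel i x0 y0) ∨
          (R.le y x ∧ x ≠ y ∧ R.rel i y0 x0)) := by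
      intro x y
      rcases htri x y with hxy|⟨h1, h2⟩|⟨h1, h2⟩
      · subst hxy
        rw [(key x x).1 rfl]
        constructor
        · exact fun hr => Or.inl ⟨rfl, hr⟩
        · rintro (⟨_, hr⟩|⟨_, hne, _⟩|⟨_, hne, _⟩)
          exacts [hr, absurd rfl hne, absurd rfl hne]
      · have h3 : ¬ R.le y x := fun h' => h2 (antisymm_of R.le h1 h')
        rw [(key x y).2.1 h1 h2]
        constructor
        · exact fun hr => Or.inr (Or.inl ⟨h1, h2, hr⟩)
        · rintro (⟨hxy, _⟩|⟨_, _, hr⟩|⟨h', _, _⟩)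
          exacts [absurd hxy h2, hr, absurd h' h3]
      · have h3 : ¬ R.le x y := fun h' => h2 (antisymm_of R.le h' h1)
        rw [(key x y).2.2 h1 h2]
        constructor
        · exact fun hr => Or.inr (Or.inr ⟨h1, h2, hr⟩)
        · rintro (⟨hxy, _⟩|⟨h', _, _⟩|⟨_, _, hr⟩)
          exacts [absurd hxy h2, absurd h' h3, hr]
    have facts : ∀ x y : R.V, (x = y → R.le x y) ∧ (x = y → R.le y x) ∧
        (R.le x y → R.le y x → x = y) ∧ (R.le x y ∨ R.le y x) :=
      fun x y => ⟨fun h' => h' ▸ refl_of R.le x, fun h' => h' ▸ refl_of R.le x,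
        fun h1 h2 => antisymm_of R.le h1 h2, total_of R.le x y⟩
    by_cases hb : R.rel i x0 y0 <;> by_cases hc : R.rel i y0 x0 <;> by_cases ha : R.rel i x0 x0
    · exact Or.inr (Or.inr (Or.inr (Or.inr (Or.inl (fun x y => by
        obtain ⟨e1, e2, e3, e4⟩ := facts x y; rw [master x y]; tauto)))))
    · exact Or.inr (Or.inr (Or.inr (Or.inr (Or.inr (Or.inl (fun x y => by
        obtain ⟨e1, e2, e3, e4⟩ := facts x y; rw [master x y]; tauto))))))
    · exact Or.inl (fun x y => by
        obtain ⟨e1, e2, e3, e4⟩ := facts x y; rw [master x y]; tauto)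
    · exact Or.inr (Or.inr (Or.inl (fun x y => by
        obtain ⟨e1, e2, e3, e4⟩ := facts x y; rw [master x y]; tauto)))
    · exact Or.inr (Or.inl (fun x y => by
        obtain ⟨e1, e2, e3, e4⟩ := facts x y; rw [master x y]; tauto))
    · exact Or.inr (Or.inr (Or.inr (Or.inl (fun x y => by
        obtain ⟨e1, e2, e3, e4⟩ := facts x y; rw [master x y]; tauto))))
    · exact Or.inr (Or.inr (Or.inr (Or.inr (Or.inr (Or.inr (Or.inl (fun x y => by
        obtain ⟨e1, e2, e3, e4⟩ := facts x y; rw [master x y]; tauto)))))))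
    · exact Or.inr (Or.inr (Or.inr (Or.inr (Or.inr (Or.inr (Or.inr (fun x y => by
        obtain ⟨e1, e2, e3, e4⟩ := facts x y; rw [master x y]; tauto)))))))
  · have heq : ∀ x y : R.V, x = y := by
      intro x y
      rcases htri x y with h'|⟨h1, h2⟩|⟨h1, h2⟩
      · exact h'
      · exact absurd ⟨(x, y), h1, h2⟩ hex
      · exact absurd ⟨(y, x), h1, Ne.symm h2⟩ hex
    by_cases hr : ∃ x : R.V, R.rel i x x
    · obtain ⟨z0, hz0⟩ := hr
      refine Or.inr (Or.inr (Or.inr (Or.inr (Or.inr (Or.inr (Or.inl fun x y => ?_))))))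
      have hxy := heq x y
      subst hxy
      exact ⟨fun _ => rfl, fun _ => (hdiag x z0 i).mpr hz0⟩
    · refine Or.inr (Or.inr (Or.inr (Or.inr (Or.inr (Or.inr (Or.inr fun x y hxy => ?_))))))
      have hxy' := heq x y
      subst hxy'
      exact hr ⟨x, hxy⟩

end OrdBin

/-- An ordered binary structure `R = (V, ≤, (ρ_i)_{i∈I})` is monomorphic iff
it is `(≤2)`-monomorphic, iff each relation `ρ_i` is one of the eight listed forms:
`≤`, its converse, `<`, its converse, the full relation, `≠`, `=`, or the empty relation. -/
theorem monomorphic_iff_le_two_monomorphic_iff_forms {ι : Type} (R : OrdBin ι) :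
    (OrdBin.Mono R ↔ OrdBin.LeMono R 2) ∧
    (OrdBin.Mono R ↔ ∀ i : ι,
      (∀ x y : R.V, R.rel i x y ↔ R.le x y) ∨
      (∀ x y : R.V, R.rel i x y ↔ R.le y x) ∨
      (∀ x y : R.V, R.rel i x y ↔ (R.le x y ∧ x ≠ y)) ∨
      (∀ x y : R.V, R.rel i x y ↔ (R.le y x ∧ x ≠ y)) ∨
      (∀ x y : R.V, R.rel i x y) ∨
      (∀ x y : R.V, R.rel i x y ↔ x ≠ y) ∨
      (∀ x y : R.V, R.rel i x y ↔ x = y) ∨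
      (∀ x y : R.V, ¬ R.rel i x y)) := by
  have himp1 : OrdBin.LeMono R 2 → ∀ i, OrdBin.Forms R i := OrdBin.lemono2_forms R
  have himp2 : (∀ i, OrdBin.Forms R i) → OrdBin.Mono R := OrdBin.forms_mono R
  have himp3 : OrdBin.Mono R → OrdBin.LeMono R 2 := fun hM m _ => hM m
  exact ⟨⟨himp3, fun h' => himp2 (himp1 h')⟩,
    ⟨fun hM => himp1 (himp3 hM), himp2⟩⟩
end

section
/- Let R = (V, ≤, (ρ_i)_{i∈I}) be an ordered binary structure and let x, y ∈ V with x < y. Then x ≃_{≤2,R} y if and only if [x,y] is an interval of R, the restriction of R to [x,y] is 1-monomorphic, and the induced substructures of R on any two 2-element subsets of [x,y] distinct from {x,y} are isomorphic. -/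
namespace OrdBin

variable {ι : Type}

lemma lrefl (R : OrdBin ι) (a : R.V) : R.le a a := by
  haveI := R.linear; exact refl_of R.le a

lemma ltrans (R : OrdBin ι) {a b c : R.V} (h1 : R.le a b) (h2 : R.le b c) : R.le a c := by
  haveI := R.linear; exact trans_of R.le h1 h2

lemma lantisymm (R : OrdBin ι) {a b : R.V} (h1 : R.le a b) (h2 : R.le b a) : a = b := by
  haveI := R.linear; exact antisymm_of R.le h1 h2

lemma ltotal (R : OrdBin ι) (a b : R.V) : R.le a b ∨ R.le b a := by
  haveI := R.linear; exact total_of R.le a b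

lemma not_le_rev (R : OrdBin ι) {a b : R.V} (h1 : R.le a b) (h2 : a ≠ b) : ¬ R.le b a :=
  fun h => h2 (R.lantisymm h1 h)

/-- Build an isomorphism of restrictions from a pair of mutually inverse maps. -/
lemma iso_of_maps (R : OrdBin ι) (A A' : Set R.V) (f g : R.V → R.V)
    (hf : ∀ a ∈ A, f a ∈ A') (hg : ∀ b ∈ A', g b ∈ A)
    (hgf : ∀ a ∈ A, g (f a) = a) (hfg : ∀ b ∈ A', f (g b) = b)
    (hle : ∀ a ∈ A, ∀ b ∈ A, (R.le a b ↔ R.le (f a) (f b)))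
    (hrel : ∀ (i : ι), ∀ a ∈ A, ∀ b ∈ A, (R.rel i a b ↔ R.rel i (f a) (f b))) :
    Iso (R.restrict A) (R.restrict A') := by
  refine ⟨⟨fun a => ⟨f a.1, hf a.1 a.2⟩, fun b => ⟨g b.1, hg b.1 b.2⟩,
    fun a => Subtype.ext (hgf a.1 a.2), fun b => Subtype.ext (hfg b.1 b.2)⟩, ?_, ?_⟩
  · intro a b; exact hle a.1 a.2 b.1 b.2
  · intro i a b; exact hrel i a.1 a.2 b.1 b.2

lemma singleton_extract (R : OrdBin ι) (a b : R.V)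
    (h : Iso (R.restrict {a}) (R.restrict {b})) :
    ∀ i, R.rel i a a ↔ R.rel i b b := by
  obtain ⟨e, _, hrel⟩ := h
  intro i
  have hb : (e ⟨a, rfl⟩).1 = b := (e ⟨a, rfl⟩).2
  have h1 : R.rel i a a ↔ R.rel i (e ⟨a, rfl⟩).1 (e ⟨a, rfl⟩).1 := hrel i ⟨a, rfl⟩ ⟨a, rfl⟩
  rwa [hb] at h1

lemma pair_extract (R : OrdBin ι) (a b a' b' : R.V)
    (hab : R.le a b) (nab : a ≠ b) (hab' : R.le a' b') (nab' : a' ≠ b')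
    (h : Iso (R.restrict {a, b}) (R.restrict {a', b'})) :
    ∀ i, (R.rel i a a ↔ R.rel i a' a') ∧ (R.rel i b b ↔ R.rel i b' b') ∧
      (R.rel i a b ↔ R.rel i a' b') ∧ (R.rel i b a ↔ R.rel i b' a') := by
  obtain ⟨e, hle, hrel⟩ := h
  have ma : a ∈ ({a, b} : Set R.V) := Set.mem_insert _ _
  have mb : b ∈ ({a, b} : Set R.V) := Set.mem_insert_of_mem _ rfl
  set pa := e ⟨a, ma⟩ with hpa
  set pb := e ⟨b, mb⟩ with hpb
  have hpane : pa.1 ≠ pb.1 := by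
    intro hh
    exact nab (congrArg Subtype.val (e.injective (Subtype.ext hh)))
  have hmema : pa.1 = a' ∨ pa.1 = b' := pa.2
  have hmemb : pb.1 = a' ∨ pb.1 = b' := pb.2
  have hlab : R.le pa.1 pb.1 := (hle ⟨a, ma⟩ ⟨b, mb⟩).1 hab
  have hkey : pa.1 = a' ∧ pb.1 = b' := by
    rcases hmema with h1 | h1 <;> rcases hmemb with h2 | h2
    · exact absurd (h1.trans h2.symm) hpane
    · exact ⟨h1, h2⟩
    · exfalso; rw [h1, h2] at hlab; exact nab' (R.lantisymm hab' hlab)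
    · exact absurd (h1.trans h2.symm) hpane
  intro i
  have h1 : R.rel i a a ↔ R.rel i pa.1 pa.1 := hrel i ⟨a, ma⟩ ⟨a, ma⟩
  have h2 : R.rel i b b ↔ R.rel i pb.1 pb.1 := hrel i ⟨b, mb⟩ ⟨b, mb⟩
  have h3 : R.rel i a b ↔ R.rel i pa.1 pb.1 := hrel i ⟨a, ma⟩ ⟨b, mb⟩
  have h4 : R.rel i b a ↔ R.rel i pb.1 pa.1 := hrel i ⟨b, mb⟩ ⟨a, ma⟩
  simp only [hkey.1, hkey.2] at h1 h2 h3 h4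
  exact ⟨h1, h2, h3, h4⟩

lemma triple_extract (R : OrdBin ι) (a b c a' b' c' : R.V)
    (hab : R.le a b) (hbc : R.le b c) (nab : a ≠ b) (nbc : b ≠ c)
    (hab' : R.le a' b') (hbc' : R.le b' c') (nab' : a' ≠ b') (nbc' : b' ≠ c')
    (h : Iso (R.restrict {a, b, c}) (R.restrict {a', b', c'})) :
    ∀ i, (R.rel i a a ↔ R.rel i a' a') ∧ (R.rel i b b ↔ R.rel i b' b') ∧
      (R.rel i c c ↔ R.rel i c' c') ∧
      (R.rel i a b ↔ R.rel i a' b') ∧ (R.rel i b a ↔ R.rel i b' a') ∧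
      (R.rel i a c ↔ R.rel i a' c') ∧ (R.rel i c a ↔ R.rel i c' a') ∧
      (R.rel i b c ↔ R.rel i b' c') ∧ (R.rel i c b ↔ R.rel i c' b') := by
  obtain ⟨e, hle, hrel⟩ := h
  have ma : a ∈ ({a, b, c} : Set R.V) := Set.mem_insert _ _
  have mb : b ∈ ({a, b, c} : Set R.V) := Set.mem_insert_of_mem _ (Set.mem_insert _ _)
  have mc : c ∈ ({a, b, c} : Set R.V) := Set.mem_insert_of_mem _ (Set.mem_insert_of_mem _ rfl)
  have nac : a ≠ c := by
    intro hh; rw [hh] at hab; exact nbc (R.lantisymm hbc hab)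
  have nba' := R.not_le_rev hab' nab'
  have ncb' := R.not_le_rev hbc' nbc'
  have hac' : R.le a' c' := R.ltrans hab' hbc'
  have nca' : ¬ R.le c' a' := R.not_le_rev hac' (by
    intro hh; rw [hh] at hab'; exact nbc' (R.lantisymm hbc' hab'))
  set pa := e ⟨a, ma⟩ with hpa
  set pb := e ⟨b, mb⟩ with hpb
  set pc := e ⟨c, mc⟩ with hpc
  have nepab : pa.1 ≠ pb.1 := fun hh =>
    nab (congrArg Subtype.val (e.injective (Subtype.ext hh)))
  have nepbc : pb.1 ≠ pc.1 := fun hh =>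
    nbc (congrArg Subtype.val (e.injective (Subtype.ext hh)))
  have nepac : pa.1 ≠ pc.1 := fun hh =>
    nac (congrArg Subtype.val (e.injective (Subtype.ext hh)))
  have hlab : R.le pa.1 pb.1 := (hle ⟨a, ma⟩ ⟨b, mb⟩).1 hab
  have hlbc : R.le pb.1 pc.1 := (hle ⟨b, mb⟩ ⟨c, mc⟩).1 hbc
  have hlac : R.le pa.1 pc.1 := R.ltrans hlab hlbc
  have hmema : pa.1 = a' ∨ pa.1 = b' ∨ pa.1 = c' := pa.2
  have hmemb : pb.1 = a' ∨ pb.1 = b' ∨ pb.1 = c' := pb.2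
  have hmemc : pc.1 = a' ∨ pc.1 = b' ∨ pc.1 = c' := pc.2
  have hkey : pa.1 = a' ∧ pb.1 = b' ∧ pc.1 = c' := by
    have ha : pa.1 = a' := by
      rcases hmema with h1 | h1 | h1
      · exact h1
      · -- pa = b' : then pb, pc must both be c'
        exfalso
        have hb2 : pb.1 = c' := by
          rcases hmemb with h2 | h2 | h2
          · rw [h1, h2] at hlab; exact (nba' hlab).elim
          · exact absurd (h1.trans h2.symm) nepab
          · exact h2
        have hc2 : pc.1 = c' := by
          rcases hmemc with h2 | h2 | h2
          · rw [h1, h2] at hlac; exact absurd hlac nba'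
          · exact absurd (h1.trans h2.symm) nepac
          · exact h2
        exact nepbc (hb2.trans hc2.symm)
      · exfalso
        have hb2 : pb.1 = c' := by
          rcases hmemb with h2 | h2 | h2
          · rw [h1, h2] at hlab; exact (nca' hlab).elim
          · rw [h1, h2] at hlab; exact (ncb' hlab).elim
          · exact h2
        exact nepab (h1.trans hb2.symm)
    have hb : pb.1 = b' := by
      rcases hmemb with h2 | h2 | h2
      · exact absurd (h2.trans ha.symm) (Ne.symm nepab)
      · exact h2
      · exfalso
        have hc2 : pc.1 = c' := by
          rcases hmemc with h3 | h3 | h3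
          · rw [h2, h3] at hlbc; exact (nca' hlbc).elim
          · rw [h2, h3] at hlbc; exact (ncb' hlbc).elim
          · exact h3
        exact nepbc (h2.trans hc2.symm)
    have hc : pc.1 = c' := by
      rcases hmemc with h3 | h3 | h3
      · exact absurd (h3.trans ha.symm) (Ne.symm nepac)
      · exact absurd (h3.trans hb.symm) (Ne.symm nepbc)
      · exact h3
    exact ⟨ha, hb, hc⟩
  intro i
  have h1 : R.rel i a a ↔ R.rel i pa.1 pa.1 := hrel i ⟨a, ma⟩ ⟨a, ma⟩
  have h2 : R.rel i b b ↔ R.rel i pb.1 pb.1 := hrel i ⟨b, mb⟩ ⟨b, mb⟩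
  have h3 : R.rel i c c ↔ R.rel i pc.1 pc.1 := hrel i ⟨c, mc⟩ ⟨c, mc⟩
  have h4 : R.rel i a b ↔ R.rel i pa.1 pb.1 := hrel i ⟨a, ma⟩ ⟨b, mb⟩
  have h5 : R.rel i b a ↔ R.rel i pb.1 pa.1 := hrel i ⟨b, mb⟩ ⟨a, ma⟩
  have h6 : R.rel i a c ↔ R.rel i pa.1 pc.1 := hrel i ⟨a, ma⟩ ⟨c, mc⟩
  have h7 : R.rel i c a ↔ R.rel i pc.1 pa.1 := hrel i ⟨c, mc⟩ ⟨a, ma⟩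
  have h8 : R.rel i b c ↔ R.rel i pb.1 pc.1 := hrel i ⟨b, mb⟩ ⟨c, mc⟩
  have h9 : R.rel i c b ↔ R.rel i pc.1 pb.1 := hrel i ⟨c, mc⟩ ⟨b, mb⟩
  simp only [hkey.1, hkey.2.1, hkey.2.2] at h1 h2 h3 h4 h5 h6 h7 h8 h9
  exact ⟨h1, h2, h3, h4, h5, h6, h7, h8, h9⟩

lemma singleton_iso (S : OrdBin ι) (a b : S.V) (h : ∀ i, S.rel i a a ↔ S.rel i b b) :
    Iso (S.restrict {a}) (S.restrict {b}) := by
  refine ⟨⟨fun _ => ⟨b, rfl⟩, fun _ => ⟨a, rfl⟩,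
    fun p => Subtype.ext p.2.symm, fun p => Subtype.ext p.2.symm⟩, ?_, ?_⟩
  · intro p q
    have hp : p.1 = a := p.2
    have hq : q.1 = a := q.2
    show S.le p.1 q.1 ↔ S.le b b
    rw [hp, hq]
    exact iff_of_true (S.lrefl a) (S.lrefl b)
  · intro i p q
    have hp : p.1 = a := p.2
    have hq : q.1 = a := q.2
    show S.rel i p.1 q.1 ↔ S.rel i b b
    rw [hp, hq]; exact h i

lemma pair_iso (R : OrdBin ι) (a b a' b' : R.V)
    (hab : R.le a b) (nab : a ≠ b) (hab' : R.le a' b') (nab' : a' ≠ b')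
    (hla : ∀ i, R.rel i a a ↔ R.rel i a' a') (hlb : ∀ i, R.rel i b b ↔ R.rel i b' b')
    (hd : ∀ i, (R.rel i a b ↔ R.rel i a' b') ∧ (R.rel i b a ↔ R.rel i b' a')) :
    Iso (R.restrict {a, b}) (R.restrict {a', b'}) := by
  classical
  refine R.iso_of_maps _ _ (fun v => if v = a then a' else b') (fun v => if v = a' then a else b)
    ?_ ?_ ?_ ?_ ?_ ?_
  · rintro v (rfl | rfl)
    · simp
    · simp only [if_neg (Ne.symm nab)]; exact Set.mem_insert_of_mem _ rfl
  · rintro v (rfl | rfl)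
    · simp
    · simp only [if_neg (Ne.symm nab')]; exact Set.mem_insert_of_mem _ rfl
  · rintro v (rfl | rfl) <;> simp [Ne.symm nab, Ne.symm nab']
  · rintro v (rfl | rfl) <;> simp [Ne.symm nab, Ne.symm nab']
  · rintro v (rfl | rfl) <;> rintro w (rfl | rfl) <;>
      simp only [if_pos rfl, if_neg (Ne.symm nab)]
    · exact iff_of_true (R.lrefl _) (R.lrefl _)
    · exact iff_of_true hab hab'
    · exact iff_of_false (R.not_le_rev hab nab) (R.not_le_rev hab' nab')
    · exact iff_of_true (R.lrefl _) (R.lrefl _)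
  · intro i
    rintro v (rfl | rfl) <;> rintro w (rfl | rfl) <;>
      simp only [if_pos rfl, if_neg (Ne.symm nab)]
    · exact hla i
    · exact (hd i).1
    · exact (hd i).2
    · exact hlb i

section Shifts

variable (R : OrdBin ι) (x y : R.V)

/-- order comparisons with an element outside the interval [x,y] are uniform. -/
lemma ordOut (hxy : R.le x y) {w : R.V} (hw : ¬ (R.le x w ∧ R.le w y))
    {u u' : R.V} (hu : R.le x u ∧ R.le u y) (hu' : R.le x u' ∧ R.le u' y) :
    (R.le u w ↔ R.le u' w) ∧ (R.le w u ↔ R.le w u') := by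
  by_cases hxw : R.le x w
  · have hyw : R.le y w := by
      rcases R.ltotal w y with h | h
      · exact absurd ⟨hxw, h⟩ hw
      · exact h
    constructor
    · exact iff_of_true (R.ltrans hu.2 hyw) (R.ltrans hu'.2 hyw)
    · constructor <;> intro h <;> exfalso
      · exact hw ⟨hxw, R.ltrans h hu.2⟩
      · exact hw ⟨hxw, R.ltrans h hu'.2⟩
  · have hwx : R.le w x := (R.ltotal x w).resolve_left hxw
    constructor
    · constructor <;> intro h <;> exfalso
      · exact hxw (R.ltrans hu.1 h)
      · exact hxw (R.ltrans hu'.1 h)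
    · exact iff_of_true (R.ltrans hwx hu.1) (R.ltrans hwx hu'.1)

lemma shift0 (hxy : R.le x y) (hne : x ≠ y) (W : Set R.V)
    (hW : ∀ w ∈ W, ¬ (R.le x w ∧ R.le w y))
    (hloop : ∀ i, R.rel i x x ↔ R.rel i y y)
    (hout : ∀ w, ¬ (R.le x w ∧ R.le w y) →
      ∀ i, (R.rel i x w ↔ R.rel i y w) ∧ (R.rel i w x ↔ R.rel i w y)) :
    Iso (R.restrict (insert x W)) (R.restrict (insert y W)) := by
  classical
  have hIx : R.le x x ∧ R.le x y := ⟨R.lrefl x, hxy⟩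
  have hIy : R.le x y ∧ R.le y y := ⟨hxy, R.lrefl y⟩
  have hxW : x ∉ W := fun h => hW x h ⟨R.lrefl x, hxy⟩
  have hyW : y ∉ W := fun h => hW y h ⟨hxy, R.lrefl y⟩
  refine R.iso_of_maps _ _ (fun v => if v = x then y else v) (fun v => if v = y then x else v)
    ?_ ?_ ?_ ?_ ?_ ?_
  · rintro v (rfl | hv)
    · simp
    · rw [if_neg (fun h : v = x => hxW (h ▸ hv))]; exact Set.mem_insert_of_mem _ hv
  · rintro v (rfl | hv)
    · simp
    · rw [if_neg (fun h : v = y => hyW (h ▸ hv))]; exact Set.mem_insert_of_mem _ hv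
  · rintro v (rfl | hv)
    · simp [Ne.symm hne]
    · rw [if_neg (fun h : v = x => hxW (h ▸ hv)), if_neg (fun h : v = y => hyW (h ▸ hv))]
  · rintro v (rfl | hv)
    · simp [hne]
    · rw [if_neg (fun h : v = y => hyW (h ▸ hv)), if_neg (fun h : v = x => hxW (h ▸ hv))]
  · rintro v (hvx | hv) <;> rintro w (hwx | hw)
    · rw [if_pos hvx, if_pos hwx, hvx, hwx]
      exact iff_of_true (R.lrefl _) (R.lrefl _)
    · rw [if_pos hvx, if_neg (fun h : w = x => hxW (h ▸ hw)), hvx]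
      exact (R.ordOut x y hxy (hW w hw) hIx hIy).1
    · rw [if_pos hwx, if_neg (fun h : v = x => hxW (h ▸ hv)), hwx]
      exact (R.ordOut x y hxy (hW v hv) hIx hIy).2
    · rw [if_neg (fun h : v = x => hxW (h ▸ hv)), if_neg (fun h : w = x => hxW (h ▸ hw))]
  · intro i
    rintro v (hvx | hv) <;> rintro w (hwx | hw)
    · rw [if_pos hvx, if_pos hwx, hvx, hwx]; exact hloop i
    · rw [if_pos hvx, if_neg (fun h : w = x => hxW (h ▸ hw)), hvx]
      exact (hout w (hW w hw) i).1
    · rw [if_pos hwx, if_neg (fun h : v = x => hxW (h ▸ hv)), hwx]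
      exact (hout v (hW v hv) i).2
    · rw [if_neg (fun h : v = x => hxW (h ▸ hv)), if_neg (fun h : w = x => hxW (h ▸ hw))]

lemma shift1 (hxy : R.le x y) (hne : x ≠ y) (z : R.V) (hxz : R.le x z) (hzy : R.le z y)
    (nzx : z ≠ x) (nzy : z ≠ y) (W : Set R.V)
    (hW : ∀ w ∈ W, ¬ (R.le x w ∧ R.le w y))
    (hl1 : ∀ i, R.rel i x x ↔ R.rel i z z) (hl2 : ∀ i, R.rel i z z ↔ R.rel i y y)
    (hd : ∀ i, (R.rel i x z ↔ R.rel i z y) ∧ (R.rel i z x ↔ R.rel i y z))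
    (hout : ∀ u, R.le x u → R.le u y → ∀ w, ¬ (R.le x w ∧ R.le w y) →
      ∀ i, (R.rel i u w ↔ R.rel i x w) ∧ (R.rel i w u ↔ R.rel i w x)) :
    Iso (R.restrict (insert x (insert z W))) (R.restrict (insert y (insert z W))) := by
  classical
  have hxW : x ∉ W := fun h => hW x h ⟨R.lrefl x, hxy⟩
  have hyW : y ∉ W := fun h => hW y h ⟨hxy, R.lrefl y⟩
  have hzW : z ∉ W := fun h => hW z h ⟨hxz, hzy⟩
  have nxz : x ≠ z := Ne.symm nzx
  have nyz : y ≠ z := Ne.symm nzy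
  have fx : (if x = x then z else if x = z then y else x) = z := by rw [if_pos rfl]
  have fz : (if z = x then z else if z = z then y else z) = y := by rw [if_neg nzx, if_pos rfl]
  have fw : ∀ w ∈ W, (if w = x then z else if w = z then y else w) = w := fun w hw => by
    rw [if_neg (fun h : w = x => hxW (h ▸ hw)), if_neg (fun h : w = z => hzW (h ▸ hw))]
  have gy : (if y = y then z else if y = z then x else y) = z := by rw [if_pos rfl]
  have gz : (if z = y then z else if z = z then x else z) = x := by rw [if_neg nzy, if_pos rfl]
  have gw : ∀ w ∈ W, (if w = y then z else if w = z then x else w) = w := fun w hw => by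
    rw [if_neg (fun h : w = y => hyW (h ▸ hw)), if_neg (fun h : w = z => hzW (h ▸ hw))]
  refine R.iso_of_maps _ _ (fun v => if v = x then z else if v = z then y else v)
    (fun v => if v = y then z else if v = z then x else v) ?_ ?_ ?_ ?_ ?_ ?_
  · intro a ha; simp only [Set.mem_insert_iff] at ha
    rcases ha with h | h | ha
    · rw [h, fx]; exact Set.mem_insert_of_mem _ (Set.mem_insert _ _)
    · rw [h, fz]; exact Set.mem_insert _ _
    · rw [fw a ha]; exact Set.mem_insert_of_mem _ (Set.mem_insert_of_mem _ ha)
  · intro a ha; simp only [Set.mem_insert_iff] at ha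
    rcases ha with h | h | ha
    · rw [h, gy]; exact Set.mem_insert_of_mem _ (Set.mem_insert _ _)
    · rw [h, gz]; exact Set.mem_insert _ _
    · rw [gw a ha]; exact Set.mem_insert_of_mem _ (Set.mem_insert_of_mem _ ha)
  · intro a ha; simp only [Set.mem_insert_iff] at ha
    rcases ha with h | h | ha
    · rw [h, fx, gz]
    · rw [h, fz, gy]
    · rw [fw a ha, gw a ha]
  · intro a ha; simp only [Set.mem_insert_iff] at ha
    rcases ha with h | h | ha
    · rw [h, gy, fz]
    · rw [h, gz, fx]
    · rw [gw a ha, fw a ha]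
  · intro a ha b hb; simp only [Set.mem_insert_iff] at ha hb
    rcases ha with h | h | ha <;> rcases hb with h' | h' | hb
    · rw [h, h', fx]; exact iff_of_true (R.lrefl _) (R.lrefl _)
    · rw [h, h', fx, fz]; exact iff_of_true hxz hzy
    · rw [h, fx, fw b hb]
      exact (R.ordOut x y hxy (hW b hb) ⟨R.lrefl x, hxy⟩ ⟨hxz, hzy⟩).1
    · rw [h, h', fz, fx]
      exact iff_of_false (R.not_le_rev hxz nxz) (R.not_le_rev hzy nzy)
    · rw [h, h', fz]; exact iff_of_true (R.lrefl _) (R.lrefl _)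
    · rw [h, fz, fw b hb]
      exact (R.ordOut x y hxy (hW b hb) ⟨hxz, hzy⟩ ⟨hxy, R.lrefl y⟩).1
    · rw [h', fx, fw a ha]
      exact (R.ordOut x y hxy (hW a ha) ⟨R.lrefl x, hxy⟩ ⟨hxz, hzy⟩).2
    · rw [h', fz, fw a ha]
      exact (R.ordOut x y hxy (hW a ha) ⟨hxz, hzy⟩ ⟨hxy, R.lrefl y⟩).2
    · rw [fw a ha, fw b hb]
  · intro i a ha b hb; simp only [Set.mem_insert_iff] at ha hb
    rcases ha with h | h | ha <;> rcases hb with h' | h' | hb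
    · rw [h, h', fx]; exact hl1 i
    · rw [h, h', fx, fz]; exact (hd i).1
    · rw [h, fx, fw b hb]
      exact ((hout x (R.lrefl x) hxy b (hW b hb) i).1).trans
        ((hout z hxz hzy b (hW b hb) i).1).symm
    · rw [h, h', fz, fx]; exact (hd i).2
    · rw [h, h', fz]; exact hl2 i
    · rw [h, fz, fw b hb]
      exact ((hout z hxz hzy b (hW b hb) i).1).trans
        ((hout y hxy (R.lrefl y) b (hW b hb) i).1).symm
    · rw [h', fx, fw a ha]
      exact ((hout x (R.lrefl x) hxy a (hW a ha) i).2).trans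
        ((hout z hxz hzy a (hW a ha) i).2).symm
    · rw [h', fz, fw a ha]
      exact ((hout z hxz hzy a (hW a ha) i).2).trans
        ((hout y hxy (R.lrefl y) a (hW a ha) i).2).symm
    · rw [fw a ha, fw b hb]

lemma shift2 (hxy : R.le x y) (hne : x ≠ y) (z1 z2 : R.V)
    (hxz1 : R.le x z1) (h12 : R.le z1 z2) (hz2y : R.le z2 y)
    (n1x : z1 ≠ x) (n1y : z1 ≠ y) (n2x : z2 ≠ x) (n2y : z2 ≠ y) (n12 : z1 ≠ z2)
    (hl1 : ∀ i, R.rel i x x ↔ R.rel i z1 z1) (hl2 : ∀ i, R.rel i z1 z1 ↔ R.rel i z2 z2)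
    (hl3 : ∀ i, R.rel i z2 z2 ↔ R.rel i y y)
    (hd1 : ∀ i, (R.rel i x z1 ↔ R.rel i z1 z2) ∧ (R.rel i z1 x ↔ R.rel i z2 z1))
    (hd2 : ∀ i, (R.rel i x z2 ↔ R.rel i z1 y) ∧ (R.rel i z2 x ↔ R.rel i y z1))
    (hd3 : ∀ i, (R.rel i z1 z2 ↔ R.rel i z2 y) ∧ (R.rel i z2 z1 ↔ R.rel i y z2)) :
    Iso (R.restrict (insert x {z1, z2})) (R.restrict (insert y {z1, z2})) := by
  classical
  have hz1y : R.le z1 y := R.ltrans h12 hz2y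
  have hxz2 : R.le x z2 := R.ltrans hxz1 h12
  have fx : (if x = x then z1 else if x = z1 then z2 else y) = z1 := by rw [if_pos rfl]
  have f1 : (if z1 = x then z1 else if z1 = z1 then z2 else y) = z2 := by
    rw [if_neg n1x, if_pos rfl]
  have f2 : (if z2 = x then z1 else if z2 = z1 then z2 else y) = y := by
    rw [if_neg n2x, if_neg (Ne.symm n12)]
  have gy : (if y = y then z2 else if y = z2 then z1 else x) = z2 := by rw [if_pos rfl]
  have g2 : (if z2 = y then z2 else if z2 = z2 then z1 else x) = z1 := by
    rw [if_neg n2y, if_pos rfl]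
  have g1 : (if z1 = y then z2 else if z1 = z2 then z1 else x) = x := by
    rw [if_neg n1y, if_neg n12]
  refine R.iso_of_maps _ _ (fun v => if v = x then z1 else if v = z1 then z2 else y)
    (fun v => if v = y then z2 else if v = z2 then z1 else x) ?_ ?_ ?_ ?_ ?_ ?_
  · intro a ha; simp only [Set.mem_insert_iff, Set.mem_singleton_iff] at ha
    rcases ha with h | h | h
    · rw [h, fx]; exact Set.mem_insert_of_mem _ (Set.mem_insert _ _)
    · rw [h, f1]; exact Set.mem_insert_of_mem _ (Set.mem_insert_of_mem _ rfl)
    · rw [h, f2]; exact Set.mem_insert _ _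
  · intro a ha; simp only [Set.mem_insert_iff, Set.mem_singleton_iff] at ha
    rcases ha with h | h | h
    · rw [h, gy]; exact Set.mem_insert_of_mem _ (Set.mem_insert_of_mem _ rfl)
    · rw [h, g1]; exact Set.mem_insert _ _
    · rw [h, g2]; exact Set.mem_insert_of_mem _ (Set.mem_insert _ _)
  · intro a ha; simp only [Set.mem_insert_iff, Set.mem_singleton_iff] at ha
    rcases ha with h | h | h
    · rw [h, fx, g1]
    · rw [h, f1, g2]
    · rw [h, f2, gy]
  · intro a ha; simp only [Set.mem_insert_iff, Set.mem_singleton_iff] at ha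
    rcases ha with h | h | h
    · rw [h, gy, f2]
    · rw [h, g1, fx]
    · rw [h, g2, f1]
  · intro a ha b hb; simp only [Set.mem_insert_iff, Set.mem_singleton_iff] at ha hb
    rcases ha with h | h | h <;> rcases hb with h' | h' | h'
    · rw [h, h', fx]; exact iff_of_true (R.lrefl _) (R.lrefl _)
    · rw [h, h', fx, f1]; exact iff_of_true hxz1 h12
    · rw [h, h', fx, f2]; exact iff_of_true hxz2 hz1y
    · rw [h, h', f1, fx]
      exact iff_of_false (R.not_le_rev hxz1 (Ne.symm n1x)) (R.not_le_rev h12 n12)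
    · rw [h, h', f1]; exact iff_of_true (R.lrefl _) (R.lrefl _)
    · rw [h, h', f1, f2]; exact iff_of_true h12 hz2y
    · rw [h, h', f2, fx]
      exact iff_of_false (R.not_le_rev hxz2 (Ne.symm n2x)) (R.not_le_rev hz1y n1y)
    · rw [h, h', f2, f1]
      exact iff_of_false (R.not_le_rev h12 n12) (R.not_le_rev hz2y n2y)
    · rw [h, h', f2]; exact iff_of_true (R.lrefl _) (R.lrefl _)
  · intro i a ha b hb; simp only [Set.mem_insert_iff, Set.mem_singleton_iff] at ha hb
    rcases ha with h | h | h <;> rcases hb with h' | h' | h'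
    · rw [h, h', fx]; exact hl1 i
    · rw [h, h', fx, f1]; exact (hd1 i).1
    · rw [h, h', fx, f2]; exact (hd2 i).1
    · rw [h, h', f1, fx]; exact (hd1 i).2
    · rw [h, h', f1]; exact hl2 i
    · rw [h, h', f1, f2]; exact (hd3 i).1
    · rw [h, h', f2, fx]; exact (hd2 i).2
    · rw [h, h', f2, f1]; exact (hd3 i).2
    · rw [h, h', f2]; exact hl3 i

end Shifts

lemma pair_eq_pair (R : OrdBin ι) {a b x y : R.V} (hab : R.le a b) (nab : a ≠ b)
    (hxy : R.le x y) (hne : x ≠ y) (heq : ({a, b} : Set R.V) = {x, y}) :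
    a = x ∧ b = y := by
  have ha : a = x ∨ a = y := by
    have : a ∈ ({x, y} : Set R.V) := heq ▸ Set.mem_insert _ _
    simpa using this
  have hb : b = x ∨ b = y := by
    have : b ∈ ({x, y} : Set R.V) := heq ▸ Set.mem_insert_of_mem _ rfl
    simpa using this
  rcases ha with ha | ha
  · rcases hb with hb | hb
    · exact absurd (ha.trans hb.symm) nab
    · exact ⟨ha, hb⟩
  · rcases hb with hb | hb
    · exfalso; rw [ha, hb] at hab; exact hne (R.lantisymm hxy hab)
    · exact absurd (ha.trans hb.symm) nab

end OrdBin

/-- For `x < y` in an ordered binary structure `R`: `x ≃_{≤2,R} y` iff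
`[x,y]` is an interval of `R`, the restriction of `R` to `[x,y]` is `1`-monomorphic,
and the substructures induced on any two `2`-element subsets of `[x,y]` distinct from
`{x,y}` are isomorphic. -/
theorem le_two_equivalent_iff {ι : Type} (R : OrdBin ι) (x y : R.V)
    (hle : R.le x y) (hne : x ≠ y) :
    OrdBin.EqLe R 2 x y ↔
      (OrdBin.IntervalR R {z : R.V | R.le x z ∧ R.le z y} ∧
       OrdBin.NMono (R.restrict {z : R.V | R.le x z ∧ R.le z y}) 1 ∧
       ∀ A A' : Set R.V,
         A ⊆ {z : R.V | R.le x z ∧ R.le z y} → A' ⊆ {z : R.V | R.le x z ∧ R.le z y} →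
         A.Finite → A'.Finite → A.ncard = 2 → A'.ncard = 2 →
         A ≠ {x, y} → A' ≠ {x, y} →
         OrdBin.Iso (R.restrict A) (R.restrict A')) := by
  have hlr := R.lrefl
  constructor
  · intro h
    have h0 : ∀ i, R.rel i x x ↔ R.rel i y y := by
      have hiso : OrdBin.Iso (R.restrict (insert x (∅ : Set R.V))) (R.restrict (insert y ∅)) :=
        h 0 (by norm_num) ∅ Set.finite_empty (Set.ncard_empty _) (Set.notMem_empty x)
          (Set.notMem_empty y)
      rw [show insert x (∅ : Set R.V) = {x} by simp,
        show insert y (∅ : Set R.V) = {y} by simp] at hiso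
      exact R.singleton_extract x y hiso
    have hIn : ∀ z, R.le x z → R.le z y → z ≠ x → z ≠ y →
        ∀ i, (R.rel i x x ↔ R.rel i z z) ∧ (R.rel i z z ↔ R.rel i y y) ∧
          (R.rel i x z ↔ R.rel i z y) ∧ (R.rel i z x ↔ R.rel i y z) := by
      intro z h1 h2 nzx nzy
      have hiso : OrdBin.Iso (R.restrict (insert x {z})) (R.restrict (insert y {z})) :=
        h 1 one_le_two {z} (Set.finite_singleton z) (Set.ncard_singleton z)
          (fun hh => nzx (Set.mem_singleton_iff.mp hh).symm)
          (fun hh => nzy (Set.mem_singleton_iff.mp hh).symm)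
      rw [Set.pair_comm y z] at hiso
      exact R.pair_extract x z z y h1 (Ne.symm nzx) h2 nzy hiso
    have hOutXY : ∀ w, ¬(R.le x w ∧ R.le w y) →
        ∀ i, (R.rel i y w ↔ R.rel i x w) ∧ (R.rel i w y ↔ R.rel i w x) := by
      intro w hw
      have nwx : w ≠ x := fun e => hw (by rw [e]; exact ⟨hlr x, hle⟩)
      have nwy : w ≠ y := fun e => hw (by rw [e]; exact ⟨hle, hlr y⟩)
      have hiso : OrdBin.Iso (R.restrict (insert x {w})) (R.restrict (insert y {w})) :=
        h 1 one_le_two {w} (Set.finite_singleton w) (Set.ncard_singleton w)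
          (fun hh => nwx (Set.mem_singleton_iff.mp hh).symm)
          (fun hh => nwy (Set.mem_singleton_iff.mp hh).symm)
      by_cases hxw : R.le x w
      · have hyw : R.le y w := (R.ltotal w y).resolve_left (fun hh => hw ⟨hxw, hh⟩)
        have hext := R.pair_extract x w y w hxw (Ne.symm nwx) hyw (Ne.symm nwy) hiso
        exact fun i => ⟨((hext i).2.2.1).symm, ((hext i).2.2.2).symm⟩
      · have hwx : R.le w x := (R.ltotal x w).resolve_left hxw
        have hwy : R.le w y := R.ltrans hwx hle
        rw [Set.pair_comm x w, Set.pair_comm y w] at hiso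
        have hext := R.pair_extract w x w y hwx nwx hwy nwy hiso
        exact fun i => ⟨((hext i).2.2.2).symm, ((hext i).2.2.1).symm⟩
    have hOutMid : ∀ w, ¬(R.le x w ∧ R.le w y) → ∀ u, R.le x u → R.le u y → u ≠ x → u ≠ y →
        ∀ i, (R.rel i u w ↔ R.rel i x w) ∧ (R.rel i w u ↔ R.rel i w x) := by
      intro w hw u h1 h2 nux nuy
      have nwx : w ≠ x := fun e => hw (by rw [e]; exact ⟨hlr x, hle⟩)
      have nwy : w ≠ y := fun e => hw (by rw [e]; exact ⟨hle, hlr y⟩)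
      have nuw : u ≠ w := fun e => hw (e ▸ ⟨h1, h2⟩)
      have hiso : OrdBin.Iso (R.restrict (insert x {u, w})) (R.restrict (insert y {u, w})) :=
        h 2 le_rfl {u, w} ((Set.finite_singleton w).insert u) (Set.ncard_pair nuw)
          (by intro hh; simp only [Set.mem_insert_iff, Set.mem_singleton_iff] at hh
              rcases hh with hh | hh
              exacts [nux hh.symm, nwx hh.symm])
          (by intro hh; simp only [Set.mem_insert_iff, Set.mem_singleton_iff] at hh
              rcases hh with hh | hh
              exacts [nuy hh.symm, nwy hh.symm])
      by_cases hxw : R.le x w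
      · have hyw : R.le y w := (R.ltotal w y).resolve_left (fun hh => hw ⟨hxw, hh⟩)
        have huw : R.le u w := R.ltrans h2 hyw
        rw [Set.insert_comm y u] at hiso
        have hext := R.triple_extract x u w u y w h1 huw (Ne.symm nux) nuw h2 hyw nuy
          (Ne.symm nwy) hiso
        exact fun i => ⟨((hext i).2.2.2.2.2.1).symm, ((hext i).2.2.2.2.2.2.1).symm⟩
      · have hwx : R.le w x := (R.ltotal x w).resolve_left hxw
        have hwu : R.le w u := R.ltrans hwx h1
        have e1 : insert x ({u, w} : Set R.V) = insert w (insert x {u}) := by ext v; simp; tauto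
        have e2 : insert y ({u, w} : Set R.V) = insert w (insert u {y}) := by ext v; simp; tauto
        rw [e1, e2] at hiso
        have hext := R.triple_extract w x u w u y hwx h1 nwx (Ne.symm nux) hwu h2
          (Ne.symm nuw) nuy hiso
        exact fun i => ⟨((hext i).2.2.2.2.1).symm, ((hext i).2.2.2.1).symm⟩
    have hOutEq : ∀ w, ¬(R.le x w ∧ R.le w y) → ∀ u, R.le x u → R.le u y →
        ∀ i, (R.rel i u w ↔ R.rel i x w) ∧ (R.rel i w u ↔ R.rel i w x) := by
      intro w hw u h1 h2
      by_cases nux : u = x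
      · intro i; rw [nux]; exact ⟨Iff.rfl, Iff.rfl⟩
      · by_cases nuy : u = y
        · intro i; rw [nuy]; exact hOutXY w hw i
        · exact hOutMid w hw u h1 h2 nux nuy
    have hLoopVal : ∀ u, R.le x u → R.le u y → ∀ i, R.rel i u u ↔ R.rel i x x := by
      intro u h1 h2 i
      by_cases nux : u = x
      · rw [nux]
      · by_cases nuy : u = y
        · rw [nuy]; exact (h0 i).symm
        · exact ((hIn u h1 h2 nux nuy i).1).symm
    have hXZaux : ∀ z z', R.le x z → R.le z y → z ≠ x → z ≠ y →
        R.le x z' → R.le z' y → z' ≠ x → z' ≠ y → R.le z z' → z ≠ z' →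
        ∀ i, (R.rel i x z ↔ R.rel i x z') ∧ (R.rel i z x ↔ R.rel i z' x) := by
      intro z z' a1 a2 a3 a4 b1 b2 b3 b4 hzz nzz
      have hiso : OrdBin.Iso (R.restrict (insert x {z, z'})) (R.restrict (insert y {z, z'})) :=
        h 2 le_rfl {z, z'} ((Set.finite_singleton _).insert _) (Set.ncard_pair nzz)
          (by intro hh; simp only [Set.mem_insert_iff, Set.mem_singleton_iff] at hh
              rcases hh with hh | hh
              exacts [a3 hh.symm, b3 hh.symm])
          (by intro hh; simp only [Set.mem_insert_iff, Set.mem_singleton_iff] at hh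
              rcases hh with hh | hh
              exacts [a4 hh.symm, b4 hh.symm])
      have e2 : insert y ({z, z'} : Set R.V) = insert z (insert z' {y}) := by ext v; simp; tauto
      rw [e2] at hiso
      have hext := R.triple_extract x z z' z z' y a1 hzz (Ne.symm a3) nzz hzz b2 nzz b4 hiso
      intro i
      exact ⟨((hIn z a1 a2 a3 a4 i).2.2.1).trans ((hext i).2.2.2.2.2.1).symm,
             ((hIn z a1 a2 a3 a4 i).2.2.2).trans ((hext i).2.2.2.2.2.2.1).symm⟩
    have hXZ : ∀ z z', R.le x z → R.le z y → z ≠ x → z ≠ y →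
        R.le x z' → R.le z' y → z' ≠ x → z' ≠ y →
        ∀ i, (R.rel i x z ↔ R.rel i x z') ∧ (R.rel i z x ↔ R.rel i z' x) := by
      intro z z' a1 a2 a3 a4 b1 b2 b3 b4
      by_cases e : z = z'
      · intro i; rw [e]; exact ⟨Iff.rfl, Iff.rfl⟩
      · rcases R.ltotal z z' with hzz | hzz
        · exact hXZaux z z' a1 a2 a3 a4 b1 b2 b3 b4 hzz e
        · intro i
          have hh := hXZaux z' z b1 b2 b3 b4 a1 a2 a3 a4 hzz (Ne.symm e) i
          exact ⟨hh.1.symm, hh.2.symm⟩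
    have hPairVal : ∀ a b, R.le x a → R.le a b → R.le b y → a ≠ b → ¬(a = x ∧ b = y) →
        ∃ z, R.le x z ∧ R.le z y ∧ z ≠ x ∧ z ≠ y ∧
          ∀ i, (R.rel i a b ↔ R.rel i x z) ∧ (R.rel i b a ↔ R.rel i z x) := by
      intro a b hxa hab hby nab hnp
      by_cases hax : a = x
      · have nby : b ≠ y := fun e => hnp ⟨hax, e⟩
        have nbx : b ≠ x := fun e => nab (hax.trans e.symm)
        refine ⟨b, R.ltrans hxa hab, hby, nbx, nby, fun i => ?_⟩
        rw [hax]; exact ⟨Iff.rfl, Iff.rfl⟩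
      · have hay : a ≠ y := fun e => by rw [e] at hab; exact nab (e.trans (R.lantisymm hby hab).symm)
        have haly : R.le a y := R.ltrans hab hby
        refine ⟨a, hxa, haly, hax, hay, ?_⟩
        by_cases hb : b = y
        · intro i
          rw [hb]
          exact ⟨((hIn a hxa haly hax hay i).2.2.1).symm, ((hIn a hxa haly hax hay i).2.2.2).symm⟩
        · have nbx : b ≠ x := fun e => hax (R.lantisymm (e ▸ hab : R.le a x) hxa)
          have hiso : OrdBin.Iso (R.restrict (insert x {a, b})) (R.restrict (insert y {a, b})) :=
            h 2 le_rfl {a, b} ((Set.finite_singleton _).insert _) (Set.ncard_pair nab)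
              (by intro hh; simp only [Set.mem_insert_iff, Set.mem_singleton_iff] at hh
                  rcases hh with hh | hh
                  exacts [hax hh.symm, nbx hh.symm])
              (by intro hh; simp only [Set.mem_insert_iff, Set.mem_singleton_iff] at hh
                  rcases hh with hh | hh
                  exacts [hay hh.symm, hb hh.symm])
          have e2 : insert y ({a, b} : Set R.V) = insert a (insert b {y}) := by ext v; simp; tauto
          rw [e2] at hiso
          have hext := R.triple_extract x a b a b y hxa hab (Ne.symm hax) nab hab hby nab hb hiso
          exact fun i => ⟨((hext i).2.2.2.1).symm, ((hext i).2.2.2.2.1).symm⟩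
    have main3 : ∀ a b a' b', R.le x a → R.le a b → R.le b y → a ≠ b → ¬(a = x ∧ b = y) →
        R.le x a' → R.le a' b' → R.le b' y → a' ≠ b' → ¬(a' = x ∧ b' = y) →
        OrdBin.Iso (R.restrict {a, b}) (R.restrict {a', b'}) := by
      intro a b a' b' q1 q2 q3 q4 q5 r1 r2 r3 r4 r5
      obtain ⟨z, z1, z2, z3, z4, hz⟩ := hPairVal a b q1 q2 q3 q4 q5
      obtain ⟨z', z1', z2', z3', z4', hz'⟩ := hPairVal a' b' r1 r2 r3 r4 r5
      refine R.pair_iso a b a' b' q2 q4 r2 r4 ?_ ?_ ?_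
      · exact fun i => (hLoopVal a q1 (R.ltrans q2 q3) i).trans
          (hLoopVal a' r1 (R.ltrans r2 r3) i).symm
      · exact fun i => (hLoopVal b (R.ltrans q1 q2) q3 i).trans
          (hLoopVal b' (R.ltrans r1 r2) r3 i).symm
      · intro i
        have hx := hXZ z z' z1 z2 z3 z4 z1' z2' z3' z4' i
        exact ⟨((hz i).1).trans (hx.1.trans ((hz' i).1).symm),
               ((hz i).2).trans (hx.2.trans ((hz' i).2).symm)⟩
    refine ⟨⟨?_, ?_⟩, ?_, ?_⟩
    · intro u hu w hw z hz1 hz2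
      exact ⟨R.ltrans hu.1 hz1, R.ltrans hz2 hw.2⟩
    · intro u hu u' hu' w hw i
      have A := hOutEq w hw u hu.1 hu.2 i
      have B := hOutEq w hw u' hu'.1 hu'.2 i
      exact ⟨A.1.trans B.1.symm, A.2.trans B.2.symm⟩
    · intro A A' hAf hA'f hA1 hA'1
      obtain ⟨a, rfl⟩ := Set.ncard_eq_one.mp hA1
      obtain ⟨b, rfl⟩ := Set.ncard_eq_one.mp hA'1
      refine OrdBin.singleton_iso _ a b (fun i => ?_)
      show R.rel i a.1 a.1 ↔ R.rel i b.1 b.1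
      exact (hLoopVal a.1 a.2.1 a.2.2 i).trans (hLoopVal b.1 b.2.1 b.2.2 i).symm
    · intro A A' hs hs' hAf hA'f h2c h2c' hneA hneA'
      obtain ⟨a, b, nab, rfl⟩ := Set.ncard_eq_two.mp h2c
      obtain ⟨a', b', nab', rfl⟩ := Set.ncard_eq_two.mp h2c'
      have ha := hs (Set.mem_insert _ _)
      have hb := hs (Set.mem_insert_of_mem _ rfl)
      have ha' := hs' (Set.mem_insert _ _)
      have hb' := hs' (Set.mem_insert_of_mem _ rfl)
      have c1 : ¬(a = x ∧ b = y) := fun hh => hneA (by rw [hh.1, hh.2])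
      have c1' : ¬(b = x ∧ a = y) := fun hh =>
        hneA (by rw [hh.1, hh.2]; exact Set.pair_comm y x)
      have c2 : ¬(a' = x ∧ b' = y) := fun hh => hneA' (by rw [hh.1, hh.2])
      have c2' : ¬(b' = x ∧ a' = y) := fun hh =>
        hneA' (by rw [hh.1, hh.2]; exact Set.pair_comm y x)
      rcases R.ltotal a b with hab | hab <;> rcases R.ltotal a' b' with hab' | hab'
      · exact main3 a b a' b' ha.1 hab hb.2 nab c1 ha'.1 hab' hb'.2 nab' c2
      · rw [Set.pair_comm a' b']
        exact main3 a b b' a' ha.1 hab hb.2 nab c1 hb'.1 hab' ha'.2 (Ne.symm nab') c2'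
      · rw [Set.pair_comm a b]
        exact main3 b a a' b' hb.1 hab ha.2 (Ne.symm nab) c1' ha'.1 hab' hb'.2 nab' c2
      · rw [Set.pair_comm a b, Set.pair_comm a' b']
        exact main3 b a b' a' hb.1 hab ha.2 (Ne.symm nab) c1' hb'.1 hab' ha'.2
          (Ne.symm nab') c2'
  · rintro ⟨hInt, hMono1, hPairs⟩
    -- loops are uniform on [x,y]
    have hloopAll : ∀ u, R.le x u → R.le u y → ∀ v, R.le x v → R.le v y →
        ∀ i, R.rel i u u ↔ R.rel i v v := by
      intro u hu1 hu2 v hv1 hv2 i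
      have hiso := hMono1 {⟨u, ⟨hu1, hu2⟩⟩} {⟨v, ⟨hv1, hv2⟩⟩} (Set.finite_singleton _)
        (Set.finite_singleton _) (Set.ncard_singleton _) (Set.ncard_singleton _)
      exact OrdBin.singleton_extract _ _ _ hiso i
    have hpair : ∀ a b a' b', R.le x a → R.le b y → R.le a b → a ≠ b →
        R.le x a' → R.le b' y → R.le a' b' → a' ≠ b' →
        ¬(a = x ∧ b = y) → ¬(a' = x ∧ b' = y) →
        ∀ i, (R.rel i a a ↔ R.rel i a' a') ∧ (R.rel i b b ↔ R.rel i b' b') ∧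
          (R.rel i a b ↔ R.rel i a' b') ∧ (R.rel i b a ↔ R.rel i b' a') := by
      intro a b a' b' hxa hby hab nab hxa' hb'y hab' nab' hp hp'
      refine R.pair_extract a b a' b' hab nab hab' nab' ?_
      refine hPairs {a, b} {a', b'} ?_ ?_ ((Set.finite_singleton b).insert a)
        ((Set.finite_singleton b').insert a') (Set.ncard_pair nab) (Set.ncard_pair nab')
        ?_ ?_
      · rintro v hv
        rcases hv with rfl | hv
        · exact ⟨hxa, R.ltrans hab hby⟩
        · rw [Set.mem_singleton_iff] at hv; subst hv; exact ⟨R.ltrans hxa hab, hby⟩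
      · rintro v hv
        rcases hv with rfl | hv
        · exact ⟨hxa', R.ltrans hab' hb'y⟩
        · rw [Set.mem_singleton_iff] at hv; subst hv; exact ⟨R.ltrans hxa' hab', hb'y⟩
      · intro he; exact hp (R.pair_eq_pair hab nab hle hne he)
      · intro he; exact hp' (R.pair_eq_pair hab' nab' hle hne he)
    have hout1 : ∀ u, R.le x u → R.le u y → ∀ w, ¬ (R.le x w ∧ R.le w y) →
        ∀ i, (R.rel i u w ↔ R.rel i x w) ∧ (R.rel i w u ↔ R.rel i w x) := by
      intro u h1 h2 w hw i
      exact hInt.2 u ⟨h1, h2⟩ x ⟨hlr x, hle⟩ w hw i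
    have hout0 : ∀ w, ¬ (R.le x w ∧ R.le w y) →
        ∀ i, (R.rel i x w ↔ R.rel i y w) ∧ (R.rel i w x ↔ R.rel i w y) := by
      intro w hw i
      exact hInt.2 x ⟨hlr x, hle⟩ y ⟨hle, hlr y⟩ w hw i
    have hl0 : ∀ i, R.rel i x x ↔ R.rel i y y :=
      fun i => hloopAll x (hlr x) hle y hle (hlr y) i
    intro m' hm' F hFfin hFcard hxF hyF
    interval_cases m'
    · -- m' = 0
      obtain rfl : F = ∅ := (Set.ncard_eq_zero hFfin).mp hFcard
      exact R.shift0 x y hle hne ∅ (by simp) hl0 hout0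
    · -- m' = 1
      obtain ⟨w, rfl⟩ := Set.ncard_eq_one.mp hFcard
      have nwx : w ≠ x := fun hh => hxF (by rw [hh]; rfl)
      have nwy : w ≠ y := fun hh => hyF (by rw [hh]; rfl)
      by_cases hin : R.le x w ∧ R.le w y
      · have hrw : ({w} : Set R.V) = insert w (∅ : Set R.V) := by simp
        rw [hrw]
        refine R.shift1 x y hle hne w hin.1 hin.2 nwx nwy ∅ (by simp)
          (fun i => hloopAll x (hlr x) hle w hin.1 hin.2 i)
          (fun i => hloopAll w hin.1 hin.2 y hle (hlr y) i) ?_ hout1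
        intro i
        have := hpair x w w y (hlr x) hin.2 hin.1 (Ne.symm nwx) hin.1 (hlr y) hin.2 nwy
          (fun hh => nwy hh.2) (fun hh => nwx hh.1) i
        exact ⟨this.2.2.1, this.2.2.2⟩
      · refine R.shift0 x y hle hne {w} ?_ hl0 hout0
        intro v hv; rw [Set.mem_singleton_iff] at hv; subst hv; exact hin
    · -- m' = 2
      obtain ⟨w1, w2, hw12, rfl⟩ := Set.ncard_eq_two.mp hFcard
      have hxF' : x ≠ w1 ∧ x ≠ w2 := by
        constructor <;> intro hh <;> exact hxF (by rw [hh]; simp)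
      have hyF' : y ≠ w1 ∧ y ≠ w2 := by
        constructor <;> intro hh <;> exact hyF (by rw [hh]; simp)
      have hdpair : ∀ z1 z2, R.le x z1 → R.le z1 z2 → R.le z2 y → z1 ≠ z2 →
          z1 ≠ x → z1 ≠ y → z2 ≠ x → z2 ≠ y →
          (∀ i, (R.rel i x z1 ↔ R.rel i z1 z2) ∧ (R.rel i z1 x ↔ R.rel i z2 z1)) ∧
          (∀ i, (R.rel i x z2 ↔ R.rel i z1 y) ∧ (R.rel i z2 x ↔ R.rel i y z1)) ∧
          (∀ i, (R.rel i z1 z2 ↔ R.rel i z2 y) ∧ (R.rel i z2 z1 ↔ R.rel i y z2)) := by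
        intro z1 z2 ha hb hc n12 n1x n1y n2x n2y
        refine ⟨fun i => ?_, fun i => ?_, fun i => ?_⟩
        · have := hpair x z1 z1 z2 (hlr x) (R.ltrans hb hc) ha (Ne.symm n1x) ha hc hb n12
            (fun hh => n1y hh.2) (fun hh => n1x hh.1) i
          exact ⟨this.2.2.1, this.2.2.2⟩
        · have := hpair x z2 z1 y (hlr x) hc (R.ltrans ha hb) (Ne.symm n2x) ha (hlr y)
            (R.ltrans hb hc) n1y (fun hh => n2y hh.2) (fun hh => n1x hh.1) i
          exact ⟨this.2.2.1, this.2.2.2⟩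
        · have := hpair z1 z2 z2 y ha hc hb n12 (R.ltrans ha hb) (hlr y) hc n2y
            (fun hh => n1x hh.1) (fun hh => n2x hh.1) i
          exact ⟨this.2.2.1, this.2.2.2⟩
      by_cases h1 : R.le x w1 ∧ R.le w1 y <;> by_cases h2 : R.le x w2 ∧ R.le w2 y
      · rcases R.ltotal w1 w2 with hor | hor
        · obtain ⟨hd1, hd2, hd3⟩ := hdpair w1 w2 h1.1 hor h2.2 hw12
            (Ne.symm hxF'.1) (Ne.symm hyF'.1) (Ne.symm hxF'.2) (Ne.symm hyF'.2)
          exact R.shift2 x y hle hne w1 w2 h1.1 hor h2.2 (Ne.symm hxF'.1) (Ne.symm hyF'.1)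
            (Ne.symm hxF'.2) (Ne.symm hyF'.2) hw12
            (fun i => hloopAll x (hlr x) hle w1 h1.1 h1.2 i)
            (fun i => hloopAll w1 h1.1 h1.2 w2 h2.1 h2.2 i)
            (fun i => hloopAll w2 h2.1 h2.2 y hle (hlr y) i) hd1 hd2 hd3
        · rw [Set.pair_comm w1 w2]
          obtain ⟨hd1, hd2, hd3⟩ := hdpair w2 w1 h2.1 hor h1.2 (Ne.symm hw12)
            (Ne.symm hxF'.2) (Ne.symm hyF'.2) (Ne.symm hxF'.1) (Ne.symm hyF'.1)
          exact R.shift2 x y hle hne w2 w1 h2.1 hor h1.2 (Ne.symm hxF'.2) (Ne.symm hyF'.2)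
            (Ne.symm hxF'.1) (Ne.symm hyF'.1) (Ne.symm hw12)
            (fun i => hloopAll x (hlr x) hle w2 h2.1 h2.2 i)
            (fun i => hloopAll w2 h2.1 h2.2 w1 h1.1 h1.2 i)
            (fun i => hloopAll w1 h1.1 h1.2 y hle (hlr y) i) hd1 hd2 hd3
      · refine R.shift1 x y hle hne w1 h1.1 h1.2 (Ne.symm hxF'.1) (Ne.symm hyF'.1) {w2}
          ?_ (fun i => hloopAll x (hlr x) hle w1 h1.1 h1.2 i)
          (fun i => hloopAll w1 h1.1 h1.2 y hle (hlr y) i) ?_ hout1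
        · intro v hv; rw [Set.mem_singleton_iff] at hv; subst hv; exact h2
        · intro i
          have := hpair x w1 w1 y (hlr x) h1.2 h1.1 hxF'.1 h1.1 (hlr y) h1.2
            (Ne.symm hyF'.1) (fun hh => hyF'.1 hh.2.symm) (fun hh => hxF'.1 hh.1.symm) i
          exact ⟨this.2.2.1, this.2.2.2⟩
      · rw [Set.pair_comm w1 w2]
        refine R.shift1 x y hle hne w2 h2.1 h2.2 (Ne.symm hxF'.2) (Ne.symm hyF'.2) {w1}
          ?_ (fun i => hloopAll x (hlr x) hle w2 h2.1 h2.2 i)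
          (fun i => hloopAll w2 h2.1 h2.2 y hle (hlr y) i) ?_ hout1
        · intro v hv; rw [Set.mem_singleton_iff] at hv; subst hv; exact h1
        · intro i
          have := hpair x w2 w2 y (hlr x) h2.2 h2.1 hxF'.2 h2.1 (hlr y) h2.2
            (Ne.symm hyF'.2) (fun hh => hyF'.2 hh.2.symm) (fun hh => hxF'.2 hh.1.symm) i
          exact ⟨this.2.2.1, this.2.2.2⟩
      · refine R.shift0 x y hle hne {w1, w2} ?_ hl0 hout0
        rintro v hv
        rcases hv with rfl | hv
        · exact h1
        · rw [Set.mem_singleton_iff] at hv; subst hv; exact h2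
end

section
/- Let R = (V, ≤, (ρ_i)_{i∈I}) be an ordered binary structure and let A ⊆ V. If A is an interval of the linear order (V, ≤) and any two elements of A are ≃_{≤1,R}-equivalent, then any two elements of A are ≃_{≤2,R}-equivalent. -/
namespace OrdBin

variable {ι : Type}

lemma iso_symm {R S : OrdBin ι} (h : Iso R S) : Iso S R := by
  obtain ⟨e, hle, hrel⟩ := h
  refine ⟨e.symm, fun x y => ?_, fun i x y => ?_⟩
  · simpa using (hle (e.symm x) (e.symm y)).symm
  · simpa using (hrel i (e.symm x) (e.symm y)).symm

lemma pair_determined (R : OrdBin ι) {a b a' b' : R.V}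
    (nab : a ≠ b) (nab' : a' ≠ b') (lab : R.le a b) (lab' : R.le a' b')
    (h : Iso (R.restrict {a, b}) (R.restrict {a', b'})) (i : ι) :
    (R.rel i a b ↔ R.rel i a' b') ∧ (R.rel i b a ↔ R.rel i b' a') ∧
    (R.rel i a a ↔ R.rel i a' a') ∧ (R.rel i b b ↔ R.rel i b' b') := by
  haveI := R.linear
  obtain ⟨e, hle, hrel⟩ := h
  have ha : a ∈ ({a, b} : Set R.V) := by simp
  have hb : b ∈ ({a, b} : Set R.V) := by simp
  have hea : (e ⟨a, ha⟩).1 = a' ∨ (e ⟨a, ha⟩).1 = b' := by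
    have h0 : (e ⟨a, ha⟩).1 ∈ ({a', b'} : Set R.V) := (e ⟨a, ha⟩).2
    simpa only [Set.mem_insert_iff, Set.mem_singleton_iff] using h0
  have heb : (e ⟨b, hb⟩).1 = a' ∨ (e ⟨b, hb⟩).1 = b' := by
    have h0 : (e ⟨b, hb⟩).1 ∈ ({a', b'} : Set R.V) := (e ⟨b, hb⟩).2
    simpa only [Set.mem_insert_iff, Set.mem_singleton_iff] using h0
  have hne : (e ⟨a, ha⟩).1 ≠ (e ⟨b, hb⟩).1 := by
    intro hh
    have h2 : (⟨a, ha⟩ : (R.restrict {a, b}).V) = ⟨b, hb⟩ := e.injective (Subtype.ext hh)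
    exact nab (congrArg Subtype.val h2)
  have key : (e ⟨a, ha⟩).1 = a' ∧ (e ⟨b, hb⟩).1 = b' := by
    rcases hea with h1 | h1
    · refine ⟨h1, ?_⟩
      rcases heb with h2 | h2
      · exact absurd (h1.trans h2.symm) hne
      · exact h2
    · exfalso
      have h2 : (e ⟨b, hb⟩).1 = a' := by
        rcases heb with h2 | h2
        · exact h2
        · exact absurd (h1.trans h2.symm) hne
      have hba : R.le b' a' := by
        have h3 := (hle ⟨a, ha⟩ ⟨b, hb⟩).mp lab
        change R.le (e ⟨a, ha⟩).1 (e ⟨b, hb⟩).1 at h3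
        rwa [h1, h2] at h3
      exact nab' (antisymm_of R.le lab' hba)
  refine ⟨?_, ?_, ?_, ?_⟩
  · have h3 := hrel i ⟨a, ha⟩ ⟨b, hb⟩
    change R.rel i a b ↔ R.rel i (e ⟨a, ha⟩).1 (e ⟨b, hb⟩).1 at h3
    rw [key.1, key.2] at h3; exact h3
  · have h3 := hrel i ⟨b, hb⟩ ⟨a, ha⟩
    change R.rel i b a ↔ R.rel i (e ⟨b, hb⟩).1 (e ⟨a, ha⟩).1 at h3
    rw [key.1, key.2] at h3; exact h3
  · have h3 := hrel i ⟨a, ha⟩ ⟨a, ha⟩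
    change R.rel i a a ↔ R.rel i (e ⟨a, ha⟩).1 (e ⟨a, ha⟩).1 at h3
    rw [key.1] at h3; exact h3
  · have h3 := hrel i ⟨b, hb⟩ ⟨b, hb⟩
    change R.rel i b b ↔ R.rel i (e ⟨b, hb⟩).1 (e ⟨b, hb⟩).1 at h3
    rw [key.2] at h3; exact h3

lemma iso_triple (R : OrdBin ι) {a b c a' b' c' : R.V}
    (lab : R.le a b) (lbc : R.le b c) (nab : a ≠ b) (nbc : b ≠ c)
    (lab' : R.le a' b') (lbc' : R.le b' c') (nab' : a' ≠ b') (nbc' : b' ≠ c')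
    (hrel : ∀ i : ι,
      (R.rel i a a ↔ R.rel i a' a') ∧ (R.rel i a b ↔ R.rel i a' b') ∧
      (R.rel i a c ↔ R.rel i a' c') ∧ (R.rel i b a ↔ R.rel i b' a') ∧
      (R.rel i b b ↔ R.rel i b' b') ∧ (R.rel i b c ↔ R.rel i b' c') ∧
      (R.rel i c a ↔ R.rel i c' a') ∧ (R.rel i c b ↔ R.rel i c' b') ∧
      (R.rel i c c ↔ R.rel i c' c')) :
    Iso (R.restrict {a, b, c}) (R.restrict {a', b', c'}) := by
  classical
  haveI := R.linear
  have nba : ¬ R.le b a := fun h => nab (antisymm_of R.le lab h)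
  have ncb : ¬ R.le c b := fun h => nbc (antisymm_of R.le lbc h)
  have lac : R.le a c := trans_of R.le lab lbc
  have nac : a ≠ c := fun h => nba (h ▸ lbc)
  have nca : ¬ R.le c a := fun h => nac (antisymm_of R.le lac h)
  have nba' : ¬ R.le b' a' := fun h => nab' (antisymm_of R.le lab' h)
  have ncb' : ¬ R.le c' b' := fun h => nbc' (antisymm_of R.le lbc' h)
  have lac' : R.le a' c' := trans_of R.le lab' lbc'
  have nac' : a' ≠ c' := fun h => nba' (h ▸ lbc')
  have nca' : ¬ R.le c' a' := fun h => nac' (antisymm_of R.le lac' h)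
  have laa : R.le a a := refl_of R.le a
  have lbb : R.le b b := refl_of R.le b
  have lcc : R.le c c := refl_of R.le c
  have laa' : R.le a' a' := refl_of R.le a'
  have lbb' : R.le b' b' := refl_of R.le b'
  have lcc' : R.le c' c' := refl_of R.le c'
  refine ⟨⟨fun z => if z.1 = a then ⟨a', by simp⟩ else if z.1 = b then ⟨b', by simp⟩
      else ⟨c', by simp⟩,
    fun z => if z.1 = a' then ⟨a, by simp⟩ else if z.1 = b' then ⟨b, by simp⟩
      else ⟨c, by simp⟩, ?_, ?_⟩, ?_, ?_⟩
  · rintro ⟨z, hz⟩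
    simp only [Set.mem_insert_iff, Set.mem_singleton_iff] at hz
    rcases hz with rfl | rfl | rfl <;>
      simp [nab, nbc, nac, nab', nbc', nac', Ne.symm nab, Ne.symm nbc, Ne.symm nac,
        Ne.symm nab', Ne.symm nbc', Ne.symm nac'] <;> rfl
  · rintro ⟨z, hz⟩
    simp only [Set.mem_insert_iff, Set.mem_singleton_iff] at hz
    rcases hz with rfl | rfl | rfl <;>
      simp [nab, nbc, nac, nab', nbc', nac', Ne.symm nab, Ne.symm nbc, Ne.symm nac,
        Ne.symm nab', Ne.symm nbc', Ne.symm nac'] <;> rfl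
  · rintro ⟨p, hp⟩ ⟨q, hq⟩
    simp only [Set.mem_insert_iff, Set.mem_singleton_iff] at hp hq
    rcases hp with rfl | rfl | rfl <;> rcases hq with rfl | rfl | rfl <;>
      simp only [Equiv.coe_fn_mk] <;> simp [restrict, nab, nbc, nac, Ne.symm nab, Ne.symm nbc, Ne.symm nac,
        lab, lbc, lac, nba, ncb, nca, laa, lbb, lcc,
        lab', lbc', lac', nba', ncb', nca', laa', lbb', lcc']
  · intro i
    obtain ⟨h1, h2, h3, h4, h5, h6, h7, h8, h9⟩ := hrel i
    rintro ⟨p, hp⟩ ⟨q, hq⟩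
    simp only [Set.mem_insert_iff, Set.mem_singleton_iff] at hp hq
    rcases hp with rfl | rfl | rfl <;> rcases hq with rfl | rfl | rfl <;>
      simp only [Equiv.coe_fn_mk] <;> simp [restrict, nab, nbc, nac, Ne.symm nab, Ne.symm nbc, Ne.symm nac] <;>
      first
        | exact h1 | exact h2 | exact h3 | exact h4 | exact h5
        | exact h6 | exact h7 | exact h8 | exact h9

lemma sideA (R : OrdBin ι) {x y z : R.V} (nxz : x ≠ z) (nyz : y ≠ z)
    (hside : (R.le z x ∧ R.le z y) ∨ (R.le x z ∧ R.le y z))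
    (h : Iso (R.restrict {x, z}) (R.restrict {y, z})) (i : ι) :
    (R.rel i x z ↔ R.rel i y z) ∧ (R.rel i z x ↔ R.rel i z y) ∧
    (R.rel i x x ↔ R.rel i y y) := by
  rcases hside with ⟨hzx, hzy⟩ | ⟨hxz, hyz⟩
  · rw [Set.pair_comm x z, Set.pair_comm y z] at h
    obtain ⟨p1, p2, p3, p4⟩ := pair_determined R (Ne.symm nxz) (Ne.symm nyz) hzx hzy h i
    exact ⟨p2, p1, p4⟩
  · obtain ⟨p1, p2, p3, p4⟩ := pair_determined R nxz nyz hxz hyz h i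
    exact ⟨p1, p2, p3⟩

lemma sideB (R : OrdBin ι) {x y z : R.V} (nxz : x ≠ z) (nzy : z ≠ y)
    (lxz : R.le x z) (lzy : R.le z y)
    (h : Iso (R.restrict {x, z}) (R.restrict {y, z})) (i : ι) :
    (R.rel i x z ↔ R.rel i z y) ∧ (R.rel i z x ↔ R.rel i y z) ∧
    (R.rel i x x ↔ R.rel i z z) ∧ (R.rel i z z ↔ R.rel i y y) := by
  rw [Set.pair_comm y z] at h
  exact pair_determined R nxz nzy lxz lzy h i

lemma key2 (R : OrdBin ι) {A : Set R.V} (hA : IntervalLe R A)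
    (h1 : ∀ x ∈ A, ∀ y ∈ A, EqLe R 1 x y)
    {x y u v : R.V} (hx : x ∈ A) (hy : y ∈ A) (nxy : x ≠ y) (lxy : R.le x y)
    (luv : R.le u v) (nuv : u ≠ v) (nxu : x ≠ u) (nxv : x ≠ v)
    (nyu : y ≠ u) (nyv : y ≠ v) :
    Iso (R.restrict {x, u, v}) (R.restrict {y, u, v}) := by
  haveI := R.linear
  have EF : ∀ a ∈ A, ∀ b ∈ A, ∀ z : R.V, a ≠ z → b ≠ z →
      Iso (R.restrict {a, z}) (R.restrict {b, z}) := fun a ha b hb z haz hbz =>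
    h1 a ha b hb 1 le_rfl {z} (Set.finite_singleton z) (Set.ncard_singleton z)
      (by simpa using haz) (by simpa using hbz)
  rcases total_of R.le u x with hux | hxu
  · -- u is to the left of x
    have huy : R.le u y := trans_of R.le hux lxy
    rcases total_of R.le v x with hvx | hxv
    · -- case 1a : u ≤ v ≤ x : triple (u,v,x) ↦ (u,v,y)
      have hvy : R.le v y := trans_of R.le hvx lxy
      have e1 : ({x, u, v} : Set R.V) = {u, v, x} := by ext w; simp; tauto
      have e2 : ({y, u, v} : Set R.V) = {u, v, y} := by ext w; simp; tauto
      rw [e1, e2]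
      refine iso_triple R luv hvx nuv (Ne.symm nxv) luv hvy nuv (Ne.symm nyv) fun i => ?_
      obtain ⟨hu1, hu2, hu3⟩ := sideA R nxu nyu (Or.inl ⟨hux, huy⟩) (EF x hx y hy u nxu nyu) i
      obtain ⟨hv1, hv2, hv3⟩ := sideA R nxv nyv (Or.inl ⟨hvx, hvy⟩) (EF x hx y hy v nxv nyv) i
      exact ⟨Iff.rfl, Iff.rfl, hu2, Iff.rfl, Iff.rfl, hv2, hu1, hv1, hu3⟩
    · rcases total_of R.le v y with hvy | hyv
      · -- case 2' : u ≤ x < v < y, v between : triple (u,x,v) ↦ (u,v,y)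
        have hvA : v ∈ A := hA x hx y hy v hxv hvy
        have huv : R.le u v := trans_of R.le hux hxv
        have e1 : ({x, u, v} : Set R.V) = {u, x, v} := by ext w; simp; tauto
        have e2 : ({y, u, v} : Set R.V) = {u, v, y} := by ext w; simp; tauto
        rw [e1, e2]
        refine iso_triple R hux hxv (Ne.symm nxu) nxv huv hvy nuv (Ne.symm nyv) fun i => ?_
        obtain ⟨b1, b2, b3, b4⟩ := sideB R nxv (Ne.symm nyv) hxv hvy (EF x hx y hy v nxv nyv) i
        obtain ⟨a1, a2, a3⟩ := sideA R nxu (Ne.symm nuv) (Or.inl ⟨hux, huv⟩)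
          (EF x hx v hvA u nxu (Ne.symm nuv)) i
        obtain ⟨c1, c2, c3⟩ := sideA R (Ne.symm nuv) nyu (Or.inl ⟨huv, huy⟩)
          (EF v hvA y hy u (Ne.symm nuv) nyu) i
        exact ⟨Iff.rfl, a2, c2, a1, b3, b1, c1, b2, b4⟩
      · -- case 1b : u ≤ x, y ≤ v : triple (u,x,v) ↦ (u,y,v)
        have e1 : ({x, u, v} : Set R.V) = {u, x, v} := by ext w; simp; tauto
        have e2 : ({y, u, v} : Set R.V) = {u, y, v} := by ext w; simp; tauto
        rw [e1, e2]
        refine iso_triple R hux hxv (Ne.symm nxu) nxv huy hyv (Ne.symm nyu) nyv fun i => ?_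
        obtain ⟨hu1, hu2, hu3⟩ := sideA R nxu nyu (Or.inl ⟨hux, huy⟩) (EF x hx y hy u nxu nyu) i
        obtain ⟨hv1, hv2, hv3⟩ := sideA R nxv nyv (Or.inr ⟨hxv, hyv⟩) (EF x hx y hy v nxv nyv) i
        exact ⟨Iff.rfl, hu2, Iff.rfl, hu1, hu3, hv1, Iff.rfl, hv2, Iff.rfl⟩
  · -- x ≤ u
    rcases total_of R.le u y with huy | hyu
    · -- u between x and y
      have huA : u ∈ A := hA x hx y hy u hxu huy
      rcases total_of R.le v y with hvy | hyv
      · -- case 3 : both u and v between : triple (x,u,v) ↦ (u,v,y)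
        have hxv : R.le x v := trans_of R.le hxu luv
        have hvA : v ∈ A := hA x hx y hy v hxv hvy
        have e2 : ({y, u, v} : Set R.V) = {u, v, y} := by ext w; simp; tauto
        rw [e2]
        refine iso_triple R hxu luv nxu nuv luv hvy nuv (Ne.symm nyv) fun i => ?_
        obtain ⟨b1, b2, b3, b4⟩ := sideB R nxu nuv hxu luv (EF x hx v hvA u nxu (Ne.symm nuv)) i
        obtain ⟨c1, c2, c3, c4⟩ := sideB R nuv (Ne.symm nyv) luv hvy (EF u huA y hy v nuv nyv) i
        obtain ⟨a1, a2, a3⟩ := sideA R nxv nuv (Or.inr ⟨hxv, luv⟩) (EF x hx u huA v nxv nuv) i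
        obtain ⟨d1, d2, d3⟩ := sideA R (Ne.symm nuv) nyu (Or.inl ⟨luv, huy⟩)
          (EF v hvA y hy u (Ne.symm nuv) nyu) i
        exact ⟨b3, b1, a1.trans d2, b2, b4, c1, a2.trans d1, c2, c4⟩
      · -- case 2 : u between, y ≤ v : triple (x,u,v) ↦ (u,y,v)
        have huv : R.le u v := trans_of R.le huy hyv
        have hxv : R.le x v := trans_of R.le hxu huv
        have e2 : ({y, u, v} : Set R.V) = {u, y, v} := by ext w; simp; tauto
        rw [e2]
        refine iso_triple R hxu huv nxu nuv huy hyv (Ne.symm nyu) nyv fun i => ?_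
        obtain ⟨b1, b2, b3, b4⟩ := sideB R nxu (Ne.symm nyu) hxu huy (EF x hx y hy u nxu nyu) i
        obtain ⟨a1, a2, a3⟩ := sideA R nxv nuv (Or.inr ⟨hxv, huv⟩) (EF x hx u huA v nxv nuv) i
        obtain ⟨c1, c2, c3⟩ := sideA R nuv nyv (Or.inr ⟨huv, hyv⟩) (EF u huA y hy v nuv nyv) i
        exact ⟨b3, b1, a1, b2, b4, c1, a2, c2, Iff.rfl⟩
    · -- case 1c : y ≤ u : triple (x,u,v) ↦ (y,u,v)
      have hxu' : R.le x u := hxu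
      have hxv : R.le x v := trans_of R.le hxu luv
      have hyv : R.le y v := trans_of R.le hyu luv
      refine iso_triple R hxu luv nxu nuv hyu luv nyu nuv fun i => ?_
      obtain ⟨hu1, hu2, hu3⟩ := sideA R nxu nyu (Or.inr ⟨hxu, hyu⟩) (EF x hx y hy u nxu nyu) i
      obtain ⟨hv1, hv2, hv3⟩ := sideA R nxv nyv (Or.inr ⟨hxv, hyv⟩) (EF x hx y hy v nxv nyv) i
      exact ⟨hu3, hu1, hv1, hu2, Iff.rfl, Iff.rfl, hv2, Iff.rfl, Iff.rfl⟩

lemma key (R : OrdBin ι) {A : Set R.V} (hA : IntervalLe R A)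
    (h1 : ∀ x ∈ A, ∀ y ∈ A, EqLe R 1 x y)
    {x y u v : R.V} (hx : x ∈ A) (hy : y ∈ A) (nxy : x ≠ y) (nuv : u ≠ v)
    (nxu : x ≠ u) (nxv : x ≠ v) (nyu : y ≠ u) (nyv : y ≠ v) :
    Iso (R.restrict (insert x {u, v})) (R.restrict (insert y {u, v})) := by
  haveI := R.linear
  rcases total_of R.le u v with huv | hvu
  · rcases total_of R.le x y with h | h
    · exact key2 R hA h1 hx hy nxy h huv nuv nxu nxv nyu nyv
    · exact iso_symm (key2 R hA h1 hy hx (Ne.symm nxy) h huv nuv nyu nyv nxu nxv)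
  · rw [Set.pair_comm u v]
    rcases total_of R.le x y with h | h
    · exact key2 R hA h1 hx hy nxy h hvu (Ne.symm nuv) nxv nxu nyv nyu
    · exact iso_symm (key2 R hA h1 hy hx (Ne.symm nxy) h hvu (Ne.symm nuv) nyv nyu nxv nxu)

end OrdBin

/-- If `A` is an interval of the linear order `(V, ≤)` and any two elements
of `A` are `≃_{≤1,R}`-equivalent, then any two elements of `A` are `≃_{≤2,R}`-equivalent. -/
theorem interval_one_equiv_to_two_equiv {ι : Type} (R : OrdBin ι)
    (A : Set R.V) (hA : OrdBin.IntervalLe R A)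
    (h1 : ∀ x ∈ A, ∀ y ∈ A, OrdBin.EqLe R 1 x y) :
    ∀ x ∈ A, ∀ y ∈ A, OrdBin.EqLe R 2 x y := by
  intro x hx y hy m' hm' F hF hcard hxF hyF
  have hm : m' = 0 ∨ m' = 1 ∨ m' = 2 := by omega
  rcases hm with rfl | rfl | rfl
  · exact h1 x hx y hy 0 (by omega) F hF hcard hxF hyF
  · exact h1 x hx y hy 1 (by omega) F hF hcard hxF hyF
  · obtain ⟨u, v, nuv, rfl⟩ := Set.ncard_eq_two.mp hcard
    have nxu : x ≠ u := fun h => hxF (by simp [h])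
    have nxv : x ≠ v := fun h => hxF (by simp [h])
    have nyu : y ≠ u := fun h => hyF (by simp [h])
    have nyv : y ≠ v := fun h => hyF (by simp [h])
    by_cases hxy : x = y
    · subst hxy
      exact ⟨Equiv.refl _, fun a b => Iff.rfl, fun i a b => Iff.rfl⟩
    · exact OrdBin.key R hA h1 hx hy hxy nuv nxu nxv nyu nyv
end
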